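/- arXiv:math/0612070 — 4 statements merged into one kernel-verified Lean document; each statement's English description precedes it below -/
import Mathlib

section
/- Every median of the binomial distribution Binomial(n, k/n), with 1 ≤ k ≤ n integers, lies between k − 1 and k; in particular, P[X ≥ k] ≥ 1/2 for X ~ Binomial(n, k/n). -/
open scoped BigOperators

/-- Spectral norm: operator norm of a matrix as a map `ℓ₂ⁿ → ℓ₂ᵐ`. -/
noncomputable def specNorm {m n : ℕ} (A : Matrix (Fin m) (Fin n) ℂ) : ℝ :=
  ‖LinearMap.toContinuousLinearMap (Matrix.toEuclideanLin A)‖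

/-- Maximum Euclidean column norm, i.e. the `ℓ₁ → ℓ₂` operator norm. -/
noncomputable def colNorm {m n : ℕ} (A : Matrix (Fin m) (Fin n) ℂ) : ℝ :=
  ⨆ j, Real.sqrt (∑ i, ‖A i j‖ ^ 2)

/-- The diagonal 0–1 projector onto the coordinates in `s`. -/
def projOf {n : ℕ} (s : Finset (Fin n)) : Matrix (Fin n) (Fin n) ℂ :=
  Matrix.diagonal fun i => if i ∈ s then 1 else 0

/-- Diagonal 0–1 matrix determined by a boolean vector. -/
def bernM {n : ℕ} (f : Fin n → Bool) : Matrix (Fin n) (Fin n) ℂ :=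
  Matrix.diagonal fun i => if f i then 1 else 0

/-- Probability weight of the outcome `f` for i.i.d. Bernoulli(ρ) selectors. -/
noncomputable def bw {n : ℕ} (ρ : ℝ) (f : Fin n → Bool) : ℝ :=
  ∏ i, if f i then ρ else 1 - ρ

open Finset
lemma xlog_antitone {s : ℝ} (hs : 0 < s) :
    AntitoneOn (fun x : ℝ => x * (Real.log (x + s) - Real.log (x - s))) (Set.Ioi s) := by
  have hderiv : ∀ x ∈ Set.Ioi s,
      HasDerivAt (fun x : ℝ => x * (Real.log (x + s) - Real.log (x - s)))
        ((Real.log (x + s) - Real.log (x - s)) + x * ((x + s)⁻¹ - (x - s)⁻¹)) x := by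
    intro x hx
    have hx' : s < x := hx
    have h1 : (0:ℝ) < x + s := by linarith
    have h2 : (0:ℝ) < x - s := by linarith
    have d1 : HasDerivAt (fun y : ℝ => Real.log (y + s)) ((x + s)⁻¹) x := by
      have := ((hasDerivAt_id x).add_const s).log h1.ne'
      simpa using this
    have d2 : HasDerivAt (fun y : ℝ => Real.log (y - s)) ((x - s)⁻¹) x := by
      have := ((hasDerivAt_id x).sub_const s).log h2.ne'
      simpa using this
    have := (hasDerivAt_id x).mul (d1.sub d2)
    refine this.congr_deriv ?_
    simp
  apply antitoneOn_of_deriv_nonpos (convex_Ioi s)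
  · intro x hx
    exact (hderiv x hx).continuousAt.continuousWithinAt
  · intro x hx
    rw [interior_Ioi] at hx
    exact ((hderiv x hx).differentiableAt).differentiableWithinAt
  · intro x hx
    rw [interior_Ioi] at hx
    rw [(hderiv x hx).deriv]
    have hx' : s < x := hx
    have h1 : (0:ℝ) < x + s := by linarith
    have h2 : (0:ℝ) < x - s := by linarith
    set r : ℝ := (x + s) / (x - s) with hr_def
    have hr : 1 < r := by
      rw [lt_div_iff₀ h2]; linarith
    have hlog : Real.log (x + s) - Real.log (x - s) = Real.log r :=
      (Real.log_div h1.ne' h2.ne').symm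
    have hsinh : Real.log r ≤ Real.sinh (Real.log r) :=
      Real.self_le_sinh_iff.2 (Real.log_pos hr).le
    rw [Real.sinh_log (by linarith : (0:ℝ) < r)] at hsinh
    have hval : (r - r⁻¹) / 2 = x * ((x - s)⁻¹ - (x + s)⁻¹) := by
      rw [hr_def, inv_div]
      field_simp
      ring
    rw [hlog]
    rw [hval] at hsinh
    have : x * ((x + s)⁻¹ - (x - s)⁻¹) = -(x * ((x - s)⁻¹ - (x + s)⁻¹)) := by ring
    rw [this]
    linarith

lemma key_ineq (m M : ℕ) (h1 : 1 ≤ m) (hmM : m ≤ M) (s : ℝ) (h0 : 0 ≤ s) (hsm : s ≤ m) :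
    ((m:ℝ) - s) ^ m * ((M:ℝ) + s) ^ (M - 1) ≤ ((m:ℝ) + s) ^ m * ((M:ℝ) - s) ^ (M - 1) := by
  have hmR : (1:ℝ) ≤ m := by exact_mod_cast h1
  have hMR : (m:ℝ) ≤ M := by exact_mod_cast hmM
  rcases eq_or_lt_of_le hsm with he | hlt
  · -- s = m
    have : ((m:ℝ) - s) = 0 := by rw [← he]; ring
    rw [this, zero_pow (by omega : m ≠ 0), zero_mul]
    have : (0:ℝ) ≤ (M:ℝ) - s := by rw [he]; linarith
    exact mul_nonneg (by positivity) (pow_nonneg this _)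
  · rcases eq_or_lt_of_le h0 with he0 | hs0
    · rw [← he0]; simp
    · -- 0 < s < m
      have p1 : (0:ℝ) < (m:ℝ) - s := by linarith
      have p2 : (0:ℝ) < (m:ℝ) + s := by linarith
      have p3 : (0:ℝ) < (M:ℝ) - s := by linarith
      have p4 : (0:ℝ) < (M:ℝ) + s := by linarith
      rw [← Real.log_le_log_iff (by positivity) (by positivity)]
      rw [Real.log_mul (by positivity) (by positivity), Real.log_mul (by positivity) (by positivity),
        Real.log_pow, Real.log_pow, Real.log_pow, Real.log_pow]
      have hmem1 : (m:ℝ) ∈ Set.Ioi s := hlt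
      have hmem2 : (M:ℝ) ∈ Set.Ioi s := by exact lt_of_lt_of_le hlt hMR
      have hA := xlog_antitone hs0 hmem1 hmem2 hMR
      simp only at hA
      have hnn : 0 ≤ Real.log ((M:ℝ) + s) - Real.log ((M:ℝ) - s) := by
        have := Real.log_le_log_iff p3 p4
        have h' : Real.log ((M:ℝ) - s) ≤ Real.log ((M:ℝ) + s) := by
          rw [Real.log_le_log_iff p3 p4]; linarith
        linarith
      have hcast : ((M - 1 : ℕ) : ℝ) ≤ (M:ℝ) := by
        have := Nat.sub_le M 1
        exact_mod_cast this
      have hMnn : (0:ℝ) ≤ ((M - 1 : ℕ) : ℝ) := by positivity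
      nlinarith [mul_le_mul_of_nonneg_left hnn hMnn,
        mul_le_mul_of_nonneg_right hcast hnn]

open Finset

def PW (n c j : ℕ) : ℕ := c ^ j * (n - c) ^ (n - j) * n.choose j

lemma term_hasDerivAt (n ν : ℕ) (x : ℝ) :
    HasDerivAt (fun y : ℝ => (n.choose ν : ℝ) * (y ^ ν * (1 - y) ^ (n - ν)))
      ((n.choose ν : ℝ) * ((ν * x ^ (ν - 1)) * (1 - x) ^ (n - ν)
        + x ^ ν * (((n - ν : ℕ) * (1 - x) ^ (n - ν - 1)) * (-1)))) x := by
  have h1 : HasDerivAt (fun y : ℝ => y ^ ν) (ν * x ^ (ν - 1)) x := hasDerivAt_pow ν x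
  have h2 : HasDerivAt (fun y : ℝ => (1 - y) ^ (n - ν))
      (((n - ν : ℕ) * (1 - x) ^ (n - ν - 1)) * (-1)) x := by
    have hlin : HasDerivAt (fun y : ℝ => 1 - y) (-1) x := by
      simpa using (hasDerivAt_id x).const_sub 1
    exact hlin.pow (n - ν)
  exact HasDerivAt.const_mul _ (h1.mul h2)

lemma tail_hasDerivAt (n : ℕ) : ∀ d t : ℕ, 1 ≤ t → t + d = n → ∀ x : ℝ,
    HasDerivAt (fun y : ℝ => ∑ ν ∈ Finset.Ico t (n+1), (n.choose ν : ℝ) * (y ^ ν * (1 - y) ^ (n - ν)))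
      ((n.choose t * t : ℕ) * (x ^ (t - 1) * (1 - x) ^ (n - t))) x := by
  intro d
  induction d with
  | zero =>
    intro t h1t htn x
    have ht : t = n := by omega
    subst ht
    have hset : Finset.Ico t (t+1) = {t} := Nat.Ico_succ_singleton t
    rw [hset]
    simp only [Finset.sum_singleton]
    have := term_hasDerivAt t t x
    convert this using 1
    simp [Nat.sub_self]
  | succ d ih =>
    intro t h1t htn x
    have htn' : t < n := by omega
    have hfun : (fun y : ℝ => ∑ ν ∈ Finset.Ico t (n+1), (n.choose ν : ℝ) * (y ^ ν * (1 - y) ^ (n - ν)))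
        = fun y : ℝ => (n.choose t : ℝ) * (y ^ t * (1 - y) ^ (n - t))
          + ∑ ν ∈ Finset.Ico (t+1) (n+1), (n.choose ν : ℝ) * (y ^ ν * (1 - y) ^ (n - ν)) := by
      funext y
      exact Finset.sum_eq_sum_Ico_succ_bot (by omega) _
    rw [hfun]
    have hIH := ih (t+1) (by omega) (by omega) x
    have hcst : ((n.choose (t+1) * (t+1) : ℕ) : ℝ) = (n.choose t : ℝ) * ((n - t : ℕ) : ℝ) := by
      rw [Nat.choose_succ_right_eq]; push_cast; ring
    rw [show t+1-1 = t from rfl, show n-(t+1) = n-t-1 from by omega, hcst] at hIH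
    have := (term_hasDerivAt n t x).add hIH
    refine this.congr_deriv ?_
    push_cast
    ring

lemma lem_int (n m : ℕ) (hm : 1 ≤ m) (hmn : 2*m < n) :
    ((n:ℝ))^n < 2 * ∑ j ∈ Finset.range (m+1), (PW n m j : ℝ) := by
  have hn : 1 ≤ n := by omega
  have hn0 : (0:ℝ) < n := by exact_mod_cast Nat.pos_of_ne_zero (by omega)
  have hmn' : m ≤ n := by omega
  set q : ℝ := (m:ℝ)/n with hq_def
  have hm0 : (0:ℝ) < m := by exact_mod_cast hm
  have hq0 : 0 < q := by positivity
  have h2mn : (2*(m:ℝ)) < n := by exact_mod_cast hmn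
  have hq1 : 2*q < 1 := by
    rw [hq_def]
    rw [show 2*((m:ℝ)/n) = (2*m)/n by ring, div_lt_one hn0]
    exact h2mn
  have hD : ∀ x : ℝ, HasDerivAt
      (fun y : ℝ => ∑ ν ∈ Finset.Ico (m+1) (n+1), (n.choose ν : ℝ) * (y ^ ν * (1 - y) ^ (n - ν)))
      ((n.choose (m+1) * (m+1) : ℕ) * (x ^ m * (1 - x) ^ (n - (m+1)))) x := by
    intro x
    have := tail_hasDerivAt n (n - (m+1)) (m+1) (by omega) (by omega) x
    simpa using this
  set ψ : ℝ → ℝ := fun y : ℝ => ∑ ν ∈ Finset.Ico (m+1) (n+1), (n.choose ν : ℝ) * (y ^ ν * (1 - y) ^ (n - ν)) with hψ_def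
  set φ : ℝ → ℝ := fun x : ℝ => ((n.choose (m+1) * (m+1) : ℕ) : ℝ) * (x ^ m * (1 - x) ^ (n - (m+1))) with hφ_def
  have hφcont : Continuous φ := by
    rw [hφ_def]; fun_prop
  have hφint : ∀ a b : ℝ, IntervalIntegrable φ MeasureTheory.volume a b :=
    fun a b => hφcont.intervalIntegrable a b
  have hFTC1 : ∫ x in (0:ℝ)..q, φ x = ψ q - ψ 0 :=
    intervalIntegral.integral_eq_sub_of_hasDerivAt (fun x _ => hD x) (hφint 0 q)
  have hFTC2 : ∫ x in q..(1:ℝ), φ x = ψ 1 - ψ q :=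
    intervalIntegral.integral_eq_sub_of_hasDerivAt (fun x _ => hD x) (hφint q 1)
  have hψ0 : ψ 0 = 0 := by
    rw [hψ_def]
    apply Finset.sum_eq_zero
    intro ν hν
    have hν0 : ν ≠ 0 := by simp [Finset.mem_Ico] at hν; omega
    simp [zero_pow hν0]
  have hψ1 : ψ 1 = 1 := by
    simp only [hψ_def]
    rw [Finset.sum_eq_single n]
    · simp
    · intro b hb hbn
      have : n - b ≠ 0 := by simp [Finset.mem_Ico] at hb; omega
      simp [zero_pow this]
    · intro hnmem
      exfalso; apply hnmem; simp [Finset.mem_Ico]; omega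
  have hsub : ∫ x in (0:ℝ)..q, φ x = ∫ x in q..(2*q), φ (2*q - x) := by
    have h := intervalIntegral.integral_comp_sub_left (a := q) (b := 2*q) φ (2*q)
    rw [show 2*q - 2*q = 0 by ring, show 2*q - q = q by ring] at h
    exact h.symm
  have hmono : ∫ x in q..(2*q), φ (2*q - x) ≤ ∫ x in q..(2*q), φ x := by
    apply intervalIntegral.integral_mono_on (by linarith)
      ((hφcont.comp (by fun_prop : Continuous fun x : ℝ => 2*q - x)).intervalIntegrable _ _)
      (hφint _ _)
    intro x hx
    obtain ⟨hx1, hx2⟩ := hx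
    suffices hgoal : φ (2*q - x) ≤ φ x by simpa [Function.comp] using hgoal
    set M : ℕ := n - m with hM_def
    have hMc : ((M : ℕ) : ℝ) = (n:ℝ) - m := by
      rw [hM_def, Nat.cast_sub hmn']
    have hexp : n - (m+1) = M - 1 := by omega
    set s : ℝ := n*x - m with hs_def
    have hs0 : 0 ≤ s := by
      have := (div_le_iff₀ hn0).1 hx1
      rw [hs_def]; linarith [this]
    have hsm : s ≤ m := by
      have hx2' : x ≤ (2*m:ℝ)/n := by
        rw [show (2*(m:ℝ))/n = 2*q by rw [hq_def]; ring]; exact hx2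
      have := (le_div_iff₀ hn0).1 hx2'
      rw [hs_def]; linarith [this]
    have e2 : 1 - (2*q - x) = (((M:ℕ):ℝ) + s)/n := by
      rw [hMc, hs_def, hq_def]; field_simp; ring
    have e1 : 2*q - x = ((m:ℝ) - s)/n := by
      rw [hs_def, hq_def]; field_simp; ring
    have e4 : 1 - x = (((M:ℕ):ℝ) - s)/n := by
      rw [hMc, hs_def]; field_simp; ring
    have e3 : x = ((m:ℝ) + s)/n := by
      rw [hs_def]; field_simp; ring
    have ekey := key_ineq m M hm (by omega) s hs0 hsm
    simp only [hφ_def]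
    rw [hexp, e2, e1, e4]
    nth_rewrite 1 [e3]
    rw [div_pow, div_pow, div_pow, div_pow, div_mul_div_comm, div_mul_div_comm]
    have hden : (0:ℝ) < (n:ℝ)^m * (n:ℝ)^(M-1) := by positivity
    gcongr
  have hadd : (∫ x in q..(2*q), φ x) + ∫ x in (2*q)..(1:ℝ), φ x = ∫ x in q..(1:ℝ), φ x :=
    intervalIntegral.integral_add_adjacent_intervals (hφint _ _) (hφint _ _)
  have hpos : 0 < ∫ x in (2*q)..(1:ℝ), φ x := by
    apply intervalIntegral.intervalIntegral_pos_of_pos_on (hφint _ _) _ hq1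
    intro x hx
    obtain ⟨h1, h2⟩ := hx
    have hx0 : 0 < x := by linarith
    have hx1' : 0 < 1 - x := by linarith
    have hc0 : (0:ℝ) < ((n.choose (m+1) * (m+1) : ℕ) : ℝ) := by
      have := Nat.choose_pos (show m+1 ≤ n by omega)
      positivity
    rw [hφ_def]
    exact mul_pos hc0 (mul_pos (pow_pos hx0 _) (pow_pos hx1' _))
  have hhalf : ψ q < 1/2 := by
    have h1 : ψ q = ∫ x in (0:ℝ)..q, φ x := by rw [hFTC1, hψ0]; ring
    linarith [hsub, hmono, hadd, hpos, hFTC2, hψ1]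
  have htot : ∑ j ∈ Finset.range (n+1), (n.choose j : ℝ) * (q^j * (1-q)^(n-j)) = 1 := by
    have h := add_pow q (1-q) n
    rw [show q + (1-q) = (1:ℝ) by ring, one_pow] at h
    rw [show ∑ j ∈ Finset.range (n+1), (n.choose j : ℝ) * (q^j * (1-q)^(n-j))
        = ∑ j ∈ Finset.range (n+1), q^j * (1-q)^(n-j) * (n.choose j : ℝ) from
      Finset.sum_congr rfl (fun j _ => by ring)]
    exact h.symm
  have hsplit : (∑ j ∈ Finset.range (m+1), (n.choose j : ℝ) * (q^j * (1-q)^(n-j))) + ψ q = 1 := by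
    have h := Finset.sum_range_add_sum_Ico (fun j => (n.choose j : ℝ) * (q^j * (1-q)^(n-j)))
      (show m+1 ≤ n+1 by omega)
    rw [htot] at h
    have hψq : ψ q = ∑ ν ∈ Finset.Ico (m+1) (n+1), (n.choose ν : ℝ) * (q ^ ν * (1 - q) ^ (n - ν)) := by
      simp only [hψ_def]
    rw [hψq]
    exact h
  have hwPW : ∀ j ∈ Finset.range (m+1), (n.choose j : ℝ) * (q^j * (1-q)^(n-j)) = (PW n m j : ℝ)/(n:ℝ)^n := by
    intro j hj
    have hjn : j ≤ n := by simp [Finset.mem_range] at hj; omega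
    have h1q : 1 - q = ((n - m : ℕ):ℝ)/n := by
      rw [hq_def, Nat.cast_sub hmn']; field_simp
    rw [hq_def, h1q, div_pow, div_pow, PW]
    push_cast
    rw [div_mul_div_comm, ← pow_add]
    rw [show j + (n - j) = n by omega]
    field_simp
  rw [Finset.sum_congr rfl hwPW] at hsplit
  rw [← Finset.sum_div] at hsplit
  have hnn : (0:ℝ) < (n:ℝ)^n := by positivity
  have : (∑ j ∈ Finset.range (m+1), (PW n m j : ℝ)) = (1 - ψ q) * (n:ℝ)^n := by
    field_simp at hsplit ⊢
    linarith [hsplit]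
  rw [this]
  nlinarith [hhalf, hnn]

lemma pair_alg (k N i : ℕ) (hik : i + 2 ≤ k) (hkN : k ≤ N) :
    (k - 1 - i) * (k + i + 1) * N^2 ≤ (N - i) * (N + 2 + i) * k^2 := by
  have h1 : 1 ≤ k := by omega
  have h2 : i ≤ k - 1 := by omega
  have h3 : i ≤ N := by omega
  zify [h1, h2, h3]
  nlinarith [sq_nonneg ((i:ℤ) + 1), sq_nonneg ((N:ℤ) - k), sq_nonneg ((N:ℤ) + k),
    mul_le_mul_of_nonneg_left (show (k:ℤ) ≤ N by exact_mod_cast hkN) (show (0:ℤ) ≤ k by positivity),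
    sq_nonneg ((i:ℤ)+1), mul_nonneg (mul_nonneg (show (0:ℤ) ≤ ((i:ℤ)+1)^2 by positivity)
      (show (0:ℤ) ≤ (N:ℤ) - k by exact_mod_cast by omega : (0:ℤ) ≤ (N:ℤ) - k))
      (show (0:ℤ) ≤ (N:ℤ) + k by positivity)]

lemma pair_core (n k N : ℕ) (hk : 1 ≤ k) (hkN : k ≤ N) (hn : n = k + N) :
    ∀ i, i < k → n.choose (k-1-i) * N^(2*i+1) ≤ n.choose (k+i) * k^(2*i+1) := by
  intro i
  induction i with
  | zero =>
    intro _
    have hid := Nat.choose_succ_right_eq n (k-1)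
    rw [show k - 1 + 1 = k by omega, show n - (k-1) = N + 1 by omega] at hid
    calc n.choose (k-1-0) * N^(2*0+1) = n.choose (k-1) * N := by norm_num
      _ ≤ n.choose (k-1) * (N+1) := by
          exact Nat.mul_le_mul_left _ (by omega)
      _ = n.choose k * k := hid.symm
      _ = n.choose (k+0) * k^(2*0+1) := by norm_num
  | succ i ih =>
    intro hik
    have hIH := ih (by omega)
    have idA := Nat.choose_succ_right_eq n (k-2-i)
    rw [show k - 2 - i + 1 = k - 1 - i by omega, show n - (k-2-i) = N + 2 + i by omega] at idA
    have idB := Nat.choose_succ_right_eq n (k+i)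
    rw [show n - (k+i) = N - i by omega] at idB
    have halg := pair_alg k N i (by omega) hkN
    have hP : 0 < (k+i+1) * (N+2+i) := by positivity
    apply Nat.le_of_mul_le_mul_left _ hP
    have hstep := Nat.mul_le_mul hIH halg
    calc (k+i+1) * (N+2+i) * (n.choose (k-1-(i+1)) * N^(2*(i+1)+1))
        = (n.choose (k-2-i) * (N+2+i)) * N^(2*(i+1)+1) * (k+i+1) := by
          rw [show k-1-(i+1) = k-2-i by omega]; ring
      _ = (n.choose (k-1-i) * (k-1-i)) * N^(2*(i+1)+1) * (k+i+1) := by rw [← idA]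
      _ = (n.choose (k-1-i) * N^(2*i+1)) * ((k-1-i) * (k+i+1) * N^2) := by ring
      _ ≤ (n.choose (k+i) * k^(2*i+1)) * ((N-i) * (N+2+i) * k^2) := hstep
      _ = (n.choose (k+i) * (N-i)) * k^(2*(i+1)+1) * (N+2+i) := by ring
      _ = (n.choose (k+i+1) * (k+i+1)) * k^(2*(i+1)+1) * (N+2+i) := by rw [idB]
      _ = (k+i+1) * (N+2+i) * (n.choose (k+(i+1)) * k^(2*(i+1)+1)) := by
          rw [show k+(i+1) = k+i+1 by omega]; ring

lemma pw_term (n k N i : ℕ) (hk : 1 ≤ k) (hkN : k ≤ N) (hn : n = k + N) (hik : i < k) :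
    PW n k (k-1-i) ≤ PW n k (k+i) := by
  have hcore := pair_core n k N hk hkN hn i hik
  have hNk : n - k = N := by omega
  calc PW n k (k-1-i) = k^(k-1-i) * N^(n-(k-1-i)) * n.choose (k-1-i) := by rw [PW, hNk]
    _ = (k^(k-1-i) * N^(N-i)) * (n.choose (k-1-i) * N^(2*i+1)) := by
        rw [show n - (k-1-i) = (N-i) + (2*i+1) by omega, pow_add]; ring
    _ ≤ (k^(k-1-i) * N^(N-i)) * (n.choose (k+i) * k^(2*i+1)) :=
        Nat.mul_le_mul_left _ hcore
    _ = k^(k+i) * N^(n-(k+i)) * n.choose (k+i) := by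
        rw [show k + i = (k-1-i) + (2*i+1) by omega, show n - ((k-1-i)+(2*i+1)) = N - i by omega,
          pow_add]; ring
    _ = PW n k (k+i) := by rw [PW, hNk]

lemma pw_strict (n k N : ℕ) (hk : 1 ≤ k) (hkN : k ≤ N) (hn : n = k + N) :
    PW n k (k-1) < PW n k k := by
  have hid := Nat.choose_succ_right_eq n (k-1)
  rw [show k - 1 + 1 = k by omega, show n - (k-1) = N + 1 by omega] at hid
  have hNk : n - k = N := by omega
  have hpos : 0 < k^(k-1) * N^N := by
    have : 0 < k := hk
    have : 0 < N := by omega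
    positivity
  have hchoose : 0 < n.choose (k-1) := Nat.choose_pos (by omega)
  calc PW n k (k-1) = k^(k-1) * N^(n-(k-1)) * n.choose (k-1) := by rw [PW, hNk]
    _ = (k^(k-1) * N^N) * (n.choose (k-1) * N) := by
        rw [show n - (k-1) = N + 1 by omega, pow_succ]; ring
    _ < (k^(k-1) * N^N) * (n.choose (k-1) * (N+1)) := by
        apply mul_lt_mul_of_pos_left _ hpos
        exact mul_lt_mul_of_pos_left (by omega) hchoose
    _ = (k^(k-1) * N^N) * (n.choose k * k) := by rw [← hid]
    _ = (k^(k-1) * k) * N^(n-k) * n.choose k := by rw [hNk]; ring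
    _ = k^k * N^(n-k) * n.choose k := by
        rw [← pow_succ, show k-1+1 = k by omega]
    _ = PW n k k := by rw [PW, hNk]

lemma lem_pair (n k : ℕ) (hk : 1 ≤ k) (h2k : 2*k ≤ n) :
    ∑ j ∈ Finset.range k, PW n k j < ∑ j ∈ Finset.Ico k (n+1), PW n k j := by
  set N := n - k with hN
  have hkN : k ≤ N := by omega
  have hn : n = k + N := by omega
  have h1 : ∑ j ∈ Finset.range k, PW n k j = ∑ i ∈ Finset.range k, PW n k (k-1-i) :=
    (Finset.sum_range_reflect (fun j => PW n k j) k).symm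
  have h2 : ∑ i ∈ Finset.range k, PW n k (k-1-i) < ∑ i ∈ Finset.range k, PW n k (k+i) := by
    apply Finset.sum_lt_sum
    · intro i hi
      exact pw_term n k N i hk hkN hn (Finset.mem_range.1 hi)
    · refine ⟨0, Finset.mem_range.2 (by omega), ?_⟩
      simpa using pw_strict n k N hk hkN hn
  have h3 : ∑ i ∈ Finset.range k, PW n k (k+i) = ∑ j ∈ Finset.Ico k (2*k), PW n k j := by
    rw [Finset.sum_Ico_eq_sum_range, show 2*k - k = k by omega]
  have h4 : ∑ j ∈ Finset.Ico k (2*k), PW n k j ≤ ∑ j ∈ Finset.Ico k (n+1), PW n k j := by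
    apply Finset.sum_le_sum_of_subset
    apply Finset.Ico_subset_Ico (le_refl _) (by omega)
  rw [h1]
  rw [h3] at h2
  exact lt_of_lt_of_le h2 h4

lemma lem_total (n k : ℕ) (hkn : k ≤ n) :
    ∑ j ∈ Finset.range (n+1), PW n k j = n^n := by
  have h := add_pow k (n-k) n
  rw [show k + (n-k) = n by omega] at h
  rw [show (∑ j ∈ Finset.range (n+1), PW n k j)
      = ∑ j ∈ Finset.range (n+1), k^j * (n-k)^(n-j) * n.choose j from
    Finset.sum_congr rfl (fun j _ => by rw [PW])]
  exact h.symm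

lemma lem_reflect (n k a : ℕ) (hkn : k ≤ n) (han : a ≤ n+1) :
    ∑ j ∈ Finset.range a, PW n k j = ∑ j ∈ Finset.Ico (n+1-a) (n+1), PW n (n-k) j := by
  apply Finset.sum_nbij' (fun j => n - j) (fun j => n - j)
  · intro j hj
    simp only [Finset.mem_range] at hj
    simp only [Finset.mem_Ico]
    omega
  · intro j hj
    simp only [Finset.mem_Ico] at hj
    simp only [Finset.mem_range]
    omega
  · intro j hj
    simp only [Finset.mem_range] at hj
    omega
  · intro j hj
    simp only [Finset.mem_Ico] at hj
    omega
  · intro j hj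
    simp only [Finset.mem_range] at hj
    have hjn : j ≤ n := by omega
    rw [PW, PW, show n - (n-k) = k by omega, show n - (n-j) = j by omega,
      Nat.choose_symm hjn]
    ring

lemma main_lt (n k : ℕ) (hk : 1 ≤ k) (hkn : k ≤ n) :
    (∑ j ∈ Finset.range k, (PW n k j : ℝ)) < ∑ j ∈ Finset.Ico k (n+1), (PW n k j : ℝ) := by
  have hn : 1 ≤ n := le_trans hk hkn
  by_cases h2k : 2*k ≤ n
  · have := lem_pair n k hk h2k
    have hcast : ((∑ j ∈ Finset.range k, PW n k j : ℕ) : ℝ)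
        < ((∑ j ∈ Finset.Ico k (n+1), PW n k j : ℕ) : ℝ) := by exact_mod_cast this
    push_cast at hcast
    exact hcast
  · push_neg at h2k
    set N := n - k with hN_def
    have htot := lem_total n k hkn
    have hsplitN : (∑ j ∈ Finset.range k, PW n k j) + (∑ j ∈ Finset.Ico k (n+1), PW n k j)
        = n^n := by
      rw [Finset.sum_range_add_sum_Ico _ (show k ≤ n+1 by omega)]
      exact htot
    by_cases hN0 : N = 0
    · -- k = n
      have hkn' : k = n := by omega
      have hA : ∑ j ∈ Finset.range k, PW n k j = 0 := by
        apply Finset.sum_eq_zero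
        intro j hj
        simp only [Finset.mem_range] at hj
        rw [PW, hkn']
        have : (n - n : ℕ) = 0 := by omega
        rw [this, zero_pow (show n - j ≠ 0 by omega)]
        ring
      have hnn : 0 < n^n := by positivity
      have hB : 0 < ∑ j ∈ Finset.Ico k (n+1), PW n k j := by omega
      have hA' : (∑ j ∈ Finset.range k, (PW n k j:ℝ)) = 0 := by
        rw [← Nat.cast_sum, hA]; norm_num
      have hB' : (0:ℝ) < ∑ j ∈ Finset.Ico k (n+1), (PW n k j:ℝ) := by
        rw [← Nat.cast_sum]; exact_mod_cast hB
      linarith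
    · have hN1 : 1 ≤ N := by omega
      have h2N : 2*N < n := by omega
      have hrefl := lem_reflect n k k hkn (by omega)
      rw [show n + 1 - k = N + 1 by omega] at hrefl
      have htotN := lem_total n N (by omega)
      have hsplit2 : (∑ j ∈ Finset.range (N+1), PW n N j) + (∑ j ∈ Finset.Ico (N+1) (n+1), PW n N j)
          = n^n := by
        rw [Finset.sum_range_add_sum_Ico _ (show N+1 ≤ n+1 by omega)]
        exact htotN
      have hint := lem_int n N hN1 h2N
      -- A = n^n - Σ_{range (N+1)} PW n N
      have hA : (∑ j ∈ Finset.range k, (PW n k j : ℝ))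
          = (n:ℝ)^n - ∑ j ∈ Finset.range (N+1), (PW n N j : ℝ) := by
        rw [← Nat.cast_sum, hrefl]
        have : (∑ j ∈ Finset.Ico (N+1) (n+1), PW n N j)
            = n^n - (∑ j ∈ Finset.range (N+1), PW n N j) := by omega
        rw [this]
        have hle : (∑ j ∈ Finset.range (N+1), PW n N j) ≤ n^n := by omega
        push_cast [hle]
        ring
      have hB : (∑ j ∈ Finset.Ico k (n+1), (PW n k j : ℝ))
          = (n:ℝ)^n - ∑ j ∈ Finset.range k, (PW n k j : ℝ) := by
        rw [← Nat.cast_sum, ← Nat.cast_sum]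
        have : (∑ j ∈ Finset.Ico k (n+1), PW n k j)
            = n^n - (∑ j ∈ Finset.range k, PW n k j) := by omega
        rw [this]
        have hle : (∑ j ∈ Finset.range k, PW n k j) ≤ n^n := by omega
        push_cast [hle]
        ring
      rw [hA, hB]
      have : (n:ℝ)^n = ((n^n : ℕ) : ℝ) := by push_cast; ring
      linarith [hint]

lemma upper_half (n k : ℕ) (hk : 1 ≤ k) (hkn : k ≤ n) :
    (n:ℝ)^n < 2 * ∑ j ∈ Finset.range (k+1), (PW n k j : ℝ) := by
  have hn : 1 ≤ n := le_trans hk hkn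
  by_cases hkn' : k = n
  · subst hkn'
    have := lem_total k k (le_refl k)
    have hcast : (∑ j ∈ Finset.range (k+1), (PW k k j : ℝ)) = (k:ℝ)^k := by
      rw [← Nat.cast_sum, this]; push_cast; ring
    rw [hcast]
    have : (0:ℝ) < (k:ℝ)^k := by positivity
    linarith
  · have hkn2 : k < n := by omega
    set N := n - k with hN_def
    have hN1 : 1 ≤ N := by omega
    have hNn : N ≤ n := by omega
    have hrefl := lem_reflect n k (k+1) hkn (by omega)
    rw [show n + 1 - (k+1) = N by omega] at hrefl
    have htotN := lem_total n N hNn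
    have hsplit2 : (∑ j ∈ Finset.range N, PW n N j) + (∑ j ∈ Finset.Ico N (n+1), PW n N j)
        = n^n := by
      rw [Finset.sum_range_add_sum_Ico _ (show N ≤ n+1 by omega)]
      exact htotN
    have hmain := main_lt n N hN1 hNn
    have hAB : (∑ j ∈ Finset.range N, (PW n N j:ℝ)) + (∑ j ∈ Finset.Ico N (n+1), (PW n N j:ℝ))
        = (n:ℝ)^n := by
      rw [← Nat.cast_sum, ← Nat.cast_sum, ← Nat.cast_add, hsplit2]
      push_cast; ring
    have hcast : (∑ j ∈ Finset.range (k+1), (PW n k j : ℝ))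
        = ∑ j ∈ Finset.Ico N (n+1), (PW n N j:ℝ) := by
      rw [← Nat.cast_sum, hrefl, Nat.cast_sum]
    rw [hcast]
    linarith

lemma fiber_card (n j : ℕ) :
    (Finset.univ.filter fun f : Fin n → Bool =>
      (Finset.univ.filter fun i => f i = true).card = j).card = n.choose j := by
  have hpc := Finset.card_powersetCard j (Finset.univ : Finset (Fin n))
  rw [Finset.card_univ, Fintype.card_fin] at hpc
  rw [← hpc]
  · apply Finset.card_bij (fun f _ => Finset.univ.filter fun i => f i = true)
    · intro f hf
      simp only [Finset.mem_filter, Finset.mem_univ, true_and] at hf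
      rw [Finset.mem_powersetCard]
      exact ⟨Finset.subset_univ _, hf⟩
    · intro f hf g hg hfg
      funext i
      simp only [Finset.mem_filter, Finset.mem_univ, true_and] at hf hg
      have := Finset.ext_iff.1 hfg i
      simp only [Finset.mem_filter, Finset.mem_univ, true_and] at this
      cases hfi : f i <;> cases hgi : g i <;> simp_all
    · intro s hs
      rw [Finset.mem_powersetCard] at hs
      refine ⟨fun i => decide (i ∈ s), ?_, ?_⟩
      · simp only [Finset.mem_filter, Finset.mem_univ, true_and]
        rw [← hs.2]
        congr 1
        ext i
        simp [Finset.mem_filter]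
      · ext i
        simp [Finset.mem_filter]

lemma bw_eq (n : ℕ) (ρ : ℝ) (f : Fin n → Bool) :
    bw ρ f = ρ^((Finset.univ.filter fun i => f i = true).card)
      * (1-ρ)^(n - (Finset.univ.filter fun i => f i = true).card) := by
  rw [bw]
  rw [Finset.prod_ite (fun _ => ρ) (fun _ => 1 - ρ)]
  rw [Finset.prod_const, Finset.prod_const]
  congr 1
  have h2 := Finset.card_filter_add_card_filter_not
    (s := (Finset.univ : Finset (Fin n))) (fun i => f i = true)
  rw [Finset.card_univ, Fintype.card_fin] at h2
  congr 1
  omega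

lemma sum_bool_eq (n : ℕ) (ρ : ℝ) (h : ℕ → ℝ) :
    (∑ f : Fin n → Bool, bw ρ f * h ((Finset.univ.filter fun i => f i = true).card))
    = ∑ j ∈ Finset.range (n+1), (n.choose j : ℝ) * (ρ^j * (1-ρ)^(n-j)) * h j := by
  have hmap : ∀ f : Fin n → Bool, f ∈ (Finset.univ : Finset (Fin n → Bool)) →
      (Finset.univ.filter fun i => f i = true).card ∈ Finset.range (n+1) := by
    intro f _
    refine Finset.mem_range.2 ?_
    have := Finset.card_filter_le (Finset.univ : Finset (Fin n)) (fun i => f i = true)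
    rw [Finset.card_univ, Fintype.card_fin] at this
    omega
  have hfib := Finset.sum_fiberwise_of_maps_to hmap
    (fun f : Fin n → Bool => bw ρ f * h ((Finset.univ.filter fun i => f i = true).card))
  rw [← hfib]
  apply Finset.sum_congr rfl
  intro j hj
  have hbody : ∀ f ∈ Finset.univ.filter (fun f : Fin n → Bool =>
      (Finset.univ.filter fun i => f i = true).card = j),
      bw ρ f * h ((Finset.univ.filter fun i => f i = true).card)
        = ρ^j * (1-ρ)^(n-j) * h j := by
    intro f hf
    simp only [Finset.mem_filter, Finset.mem_univ, true_and] at hf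
    rw [bw_eq, hf]
  rw [Finset.sum_congr rfl hbody, Finset.sum_const, fiber_card]
  rw [nsmul_eq_mul]
  ring

lemma w_eq (n k j : ℕ) (hn : 1 ≤ n) (hkn : k ≤ n) (hjn : j ≤ n) :
    (n.choose j : ℝ) * (((k:ℝ)/n)^j * (1-(k:ℝ)/n)^(n-j)) = (PW n k j : ℝ)/(n:ℝ)^n := by
  have hn0 : (0:ℝ) < n := by exact_mod_cast hn
  have h1q : 1 - (k:ℝ)/n = ((n - k : ℕ):ℝ)/n := by
    rw [Nat.cast_sub hkn]; field_simp
  rw [h1q, div_pow, div_pow, PW]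
  push_cast
  rw [div_mul_div_comm, ← pow_add, show j + (n - j) = n by omega]
  field_simp

lemma sum_ind_eq (n k : ℕ) (hk : 1 ≤ n) (hkn : k ≤ n) (P : ℕ → Prop) [DecidablePred P] :
    (∑ f : Fin n → Bool, bw ((k:ℝ)/n) f *
      (if P ((Finset.univ.filter fun i => f i = true).card) then 1 else 0))
    = (∑ j ∈ (Finset.range (n+1)).filter P, (PW n k j : ℝ)) / (n:ℝ)^n := by
  rw [sum_bool_eq n ((k:ℝ)/n) (fun j => if P j then 1 else 0)]
  rw [Finset.sum_filter, Finset.sum_div]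
  apply Finset.sum_congr rfl
  intro j hj
  have hjn : j ≤ n := by
    simp only [Finset.mem_range] at hj; omega
  by_cases hP : P j
  · simp only [hP, if_true, mul_one]
    exact w_eq n k j hk hkn hjn
  · simp [hP]

/-- Medians of Binomial(n, k/n) lie between k-1 and k; in particular P[X ≥ k] ≥ 1/2. -/
theorem binomial_median (n k : ℕ) (hk : 1 ≤ k) (hkn : k ≤ n) :
    (∀ m : ℕ,
      ((1:ℝ)/2 ≤ ∑ f : Fin n → Bool, bw ((k:ℝ)/n) f *
          (if (Finset.univ.filter fun i => f i = true).card ≤ m then 1 else 0)) →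
      ((1:ℝ)/2 ≤ ∑ f : Fin n → Bool, bw ((k:ℝ)/n) f *
          (if m ≤ (Finset.univ.filter fun i => f i = true).card then 1 else 0)) →
      k - 1 ≤ m ∧ m ≤ k) ∧
    (1:ℝ)/2 ≤ ∑ f : Fin n → Bool, bw ((k:ℝ)/n) f *
        (if k ≤ (Finset.univ.filter fun i => f i = true).card then 1 else 0) := by
  have hn : 1 ≤ n := le_trans hk hkn
  have hnn : (0:ℝ) < (n:ℝ)^n := by
    have : (0:ℝ) < n := by exact_mod_cast hn
    positivity
  have hmain := main_lt n k hk hkn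
  have hupper := upper_half n k hk hkn
  have hsplitR : ∀ a : ℕ, a ≤ n+1 →
      (∑ j ∈ Finset.range a, (PW n k j:ℝ)) + (∑ j ∈ Finset.Ico a (n+1), (PW n k j:ℝ))
        = (n:ℝ)^n := by
    intro a ha
    have h2 := Finset.sum_range_add_sum_Ico (fun j => PW n k j) ha
    rw [lem_total n k hkn] at h2
    exact_mod_cast h2
  have hnonneg : ∀ j : ℕ, (0:ℝ) ≤ (PW n k j : ℝ) := by
    intro j; positivity
  constructor
  · intro m hm1 hm2
    constructor
    · -- k - 1 ≤ m
      by_contra hc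
      push_neg at hc
      rw [sum_ind_eq n k hn hkn (fun j => j ≤ m)] at hm1
      rw [le_div_iff₀ hnn] at hm1
      have hsub : (Finset.range (n+1)).filter (fun j => j ≤ m) ⊆ Finset.range k := by
        intro j hj
        simp only [Finset.mem_filter, Finset.mem_range] at hj ⊢
        omega
      have hle := Finset.sum_le_sum_of_subset_of_nonneg hsub
        (fun j _ _ => hnonneg j)
      have hsp := hsplitR k (by omega)
      linarith
    · -- m ≤ k
      by_contra hc
      push_neg at hc
      rw [sum_ind_eq n k hn hkn (fun j => m ≤ j)] at hm2
      rw [le_div_iff₀ hnn] at hm2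
      have hsub : (Finset.range (n+1)).filter (fun j => m ≤ j) ⊆ Finset.Ico (k+1) (n+1) := by
        intro j hj
        simp only [Finset.mem_filter, Finset.mem_range, Finset.mem_Ico] at hj ⊢
        omega
      have hle := Finset.sum_le_sum_of_subset_of_nonneg hsub
        (fun j _ _ => hnonneg j)
      have hsp := hsplitR (k+1) (by omega)
      linarith
  · rw [sum_ind_eq n k hn hkn (fun j => k ≤ j)]
    have hfe : (Finset.range (n+1)).filter (fun j => k ≤ j) = Finset.Ico k (n+1) := by
      ext j
      simp only [Finset.mem_filter, Finset.mem_range, Finset.mem_Ico]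
      omega
    rw [hfe, le_div_iff₀ hnn]
    have hsp := hsplitR k (by omega)
    linarith
end

section
/- Let X be an n×n matrix and let R_ρ be a random diagonal matrix with i.i.d. Bernoulli(ρ) diagonal entries, ρ ∈ (0,1). Suppose p ≥ 2 log n and p ≥ 4. Then (E ‖R_ρ X‖_{1→2}^p)^{1/p} ≤ 2^{3/2} √p · ‖X‖_max + √ρ · ‖X‖_{1→2}, where ‖X‖_max is the largest absolute value of an entry of X and ‖X‖_{1→2} is the maximum Euclidean column norm. -/
open scoped BigOperators

/-- Maximum absolute entry of a matrix. -/
noncomputable def maxEntry {m n : ℕ} (A : Matrix (Fin m) (Fin n) ℂ) : ℝ :=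
  ⨆ i, ⨆ j, ‖A i j‖

/-- quadratic upper bound on exp on [-1,1] -/
lemma exp_quad {x : ℝ} (hx : |x| ≤ 1) : Real.exp x ≤ 1 + x + 3/4 * x^2 := by
  have h := Real.exp_bound hx (n := 2) (by norm_num)
  have h2 : ∑ m ∈ Finset.range 2, x ^ m / m.factorial = 1 + x := by
    simp [Finset.sum_range_succ]
  rw [h2] at h
  have h3 : |x| ^ 2 = x ^ 2 := sq_abs x
  rw [h3] at h
  have h4 : ((Nat.succ 2 : ℕ) : ℝ) / ((Nat.factorial 2 : ℕ) * (2:ℕ)) = 3/4 := by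
    norm_num [Nat.factorial]
  rw [h4] at h
  have := (abs_sub_le_iff.1 h).1
  linarith

lemma factor_bound {ρ s a : ℝ} (hρ0 : 0 < ρ) (hρ1 : ρ < 1) (ha : 0 ≤ a)
    (hsa : |s| * a ≤ 1) :
    ρ * Real.exp (s * ((1:ℝ) - ρ) * a) + (1 - ρ) * Real.exp (s * ((0:ℝ) - ρ) * a)
      ≤ Real.exp (3/4 * ρ * (s * a)^2) := by
  have habs : |s * a| ≤ 1 := by
    rwa [abs_mul, abs_of_nonneg ha]
  have h1 : (1 - ρ) + ρ * Real.exp (s * a) ≤ Real.exp (ρ * (Real.exp (s * a) - 1)) := by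
    have := Real.add_one_le_exp (ρ * (Real.exp (s * a) - 1))
    linarith
  have hE : Real.exp (s * a) - 1 - s * a ≤ 3/4 * (s * a)^2 := by
    have := exp_quad habs
    linarith
  have key : ρ * Real.exp (s * ((1:ℝ) - ρ) * a) + (1 - ρ) * Real.exp (s * ((0:ℝ) - ρ) * a)
      = Real.exp (-(s * ρ * a)) * ((1 - ρ) + ρ * Real.exp (s * a)) := by
    rw [mul_add]
    rw [show s * ((1:ℝ) - ρ) * a = s * a + -(s * ρ * a) by ring,
        show s * ((0:ℝ) - ρ) * a = -(s * ρ * a) by ring, Real.exp_add]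
    ring
  rw [key]
  calc Real.exp (-(s * ρ * a)) * ((1 - ρ) + ρ * Real.exp (s * a))
      ≤ Real.exp (-(s * ρ * a)) * Real.exp (ρ * (Real.exp (s * a) - 1)) := by
        apply mul_le_mul_of_nonneg_left h1 (Real.exp_pos _).le
    _ = Real.exp (ρ * (Real.exp (s * a) - 1 - s * a)) := by
        rw [← Real.exp_add]; ring_nf
    _ ≤ Real.exp (3/4 * ρ * (s * a)^2) := by
        apply Real.exp_le_exp.2
        have := mul_le_mul_of_nonneg_left hE hρ0.le
        calc ρ * (Real.exp (s*a) - 1 - s*a) ≤ ρ * (3/4 * (s*a)^2) := this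
          _ = 3/4 * ρ * (s*a)^2 := by ring

lemma rpow_le_exp_aux {q y : ℝ} (hq : 0 < q) (hy : 0 ≤ y) :
    y ^ q ≤ (q / Real.exp 1) ^ q * Real.exp y := by
  rcases eq_or_lt_of_le hy with h | h
  · rw [← h, Real.zero_rpow hq.ne']
    positivity
  · have hqe : 0 < q / Real.exp 1 := div_pos hq (Real.exp_pos 1)
    rw [Real.rpow_def_of_pos h, Real.rpow_def_of_pos hqe, ← Real.exp_add]
    apply Real.exp_le_exp.2
    have hlog : Real.log (y / q) ≤ y / q - 1 := Real.log_le_sub_one_of_pos (div_pos h hq)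
    rw [Real.log_div h.ne' hq.ne'] at hlog
    rw [Real.log_div hq.ne' (Real.exp_ne_zero 1), Real.log_exp]
    have := mul_le_mul_of_nonneg_left hlog hq.le
    have hyq : q * (y / q) = y := by field_simp
    nlinarith

lemma abs_rpow_le {q lam z : ℝ} (hq : 0 < q) (hl : 0 < lam) :
    |z| ^ q ≤ (q / (Real.exp 1 * lam)) ^ q * (Real.exp (lam * z) + Real.exp (-(lam * z))) := by
  have h := rpow_le_exp_aux hq (mul_nonneg hl.le (abs_nonneg z))
  have hsplit : Real.exp (lam * |z|) ≤ Real.exp (lam * z) + Real.exp (-(lam * z)) := by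
    rcases abs_cases z with ⟨he, _⟩ | ⟨he, _⟩
    · rw [he]; nlinarith [Real.exp_pos (-(lam * z))]
    · rw [he, mul_neg, ← neg_mul]; nlinarith [Real.exp_pos (lam * z)]
  have hmul : (lam * |z|) ^ q = lam ^ q * |z| ^ q := Real.mul_rpow hl.le (abs_nonneg z)
  have hdiv : (q / (Real.exp 1 * lam)) ^ q = (q / Real.exp 1) ^ q / lam ^ q := by
    rw [show q / (Real.exp 1 * lam) = (q / Real.exp 1) / lam by ring,
      Real.div_rpow (div_nonneg hq.le (Real.exp_pos 1).le) hl.le]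
  have hlq : 0 < lam ^ q := Real.rpow_pos_of_pos hl q
  rw [hdiv]
  rw [hmul] at h
  have h2 : |z| ^ q ≤ (q / Real.exp 1) ^ q / lam ^ q * Real.exp (lam * |z|) := by
    rw [div_mul_eq_mul_div, le_div_iff₀ hlq]
    calc |z| ^ q * lam ^ q = lam ^ q * |z| ^ q := by ring
      _ ≤ (q / Real.exp 1) ^ q * Real.exp (lam * |z|) := h
  refine h2.trans ?_
  apply mul_le_mul_of_nonneg_left hsplit
  positivity

lemma swap_sum {n : ℕ} (g : Fin n → Bool → ℝ) :
    ∑ f : Fin n → Bool, ∏ i, g i (f i) = ∏ i, (g i true + g i false) := by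
  rw [← Fintype.prod_sum g]
  congr 1; ext i
  simp [Fintype.sum_bool]

lemma bw_nonneg {n : ℕ} {ρ : ℝ} (h0 : 0 ≤ ρ) (h1 : ρ ≤ 1) (f : Fin n → Bool) :
    0 ≤ bw ρ f := by
  apply Finset.prod_nonneg
  intro i _
  by_cases hf : f i <;> simp [hf, h0] <;> linarith

lemma bw_sum {n : ℕ} {ρ : ℝ} : ∑ f : Fin n → Bool, bw ρ f = 1 := by
  have h : ∑ f : Fin n → Bool, bw ρ f
      = ∏ _i : Fin n, ((if true then ρ else 1 - ρ) + (if false then ρ else 1 - ρ)) :=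
    swap_sum (fun _ b => if b then ρ else 1 - ρ)
  rw [h]; simp

lemma mgf_bound {n : ℕ} {ρ s : ℝ} (hρ0 : 0 < ρ) (hρ1 : ρ < 1) (c : Fin n → ℝ)
    (hc : ∀ i, 0 ≤ c i) (hsc : ∀ i, |s| * c i ≤ 1) :
    ∑ f : Fin n → Bool, bw ρ f * Real.exp (s * ∑ i, ((if f i then (1:ℝ) else 0) - ρ) * c i)
      ≤ Real.exp (3/4 * ρ * s^2 * ∑ i, (c i)^2) := by
  set G : Fin n → Bool → ℝ := fun i b => (if b then ρ else 1 - ρ) *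
      Real.exp (s * ((if b then (1:ℝ) else 0) - ρ) * c i) with hG
  have key : ∀ f : Fin n → Bool,
      bw ρ f * Real.exp (s * ∑ i, ((if f i then (1:ℝ) else 0) - ρ) * c i)
      = ∏ i, G i (f i) := by
    intro f
    simp only [hG]
    rw [Finset.prod_mul_distrib]
    congr 1
    rw [Finset.mul_sum, Real.exp_sum]
    congr 1; ext i; ring_nf
  have h2 : ∑ f : Fin n → Bool, bw ρ f *
        Real.exp (s * ∑ i, ((if f i then (1:ℝ) else 0) - ρ) * c i)
      = ∏ i, (G i true + G i false) :=
    (Finset.sum_congr rfl (fun f _ => key f)).trans (swap_sum G)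
  rw [h2]
  have hstep : ∀ i : Fin n, G i true + G i false ≤ Real.exp (3/4 * ρ * (s * c i)^2) := by
    intro i
    have := factor_bound (s := s) (a := c i) hρ0 hρ1 (hc i) (hsc i)
    simpa [hG] using this
  calc ∏ i, (G i true + G i false)
      ≤ ∏ i, Real.exp (3/4 * ρ * (s * c i)^2) := by
        apply Finset.prod_le_prod
        · intro i _
          have h1 : 0 ≤ G i true := by simp only [hG]; positivity
          have h2 : 0 ≤ G i false := by
            simp only [hG, if_false]
            have : 0 ≤ 1 - ρ := by linarith
            positivity
          linarith
        · intro i _; exact hstep i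
    _ = Real.exp (3/4 * ρ * s^2 * ∑ i, (c i)^2) := by
        rw [← Real.exp_sum]
        congr 1
        rw [Finset.mul_sum]
        congr 1; ext i; ring

section MainProof

open Finset

theorem colNorm_nonneg' {m n : ℕ} (A : Matrix (Fin m) (Fin n) ℂ) : 0 ≤ colNorm A :=
  Real.iSup_nonneg fun _ => Real.sqrt_nonneg _

theorem maxEntry_nonneg' {m n : ℕ} (A : Matrix (Fin m) (Fin n) ℂ) : 0 ≤ maxEntry A :=
  Real.iSup_nonneg fun _ => Real.iSup_nonneg fun _ => norm_nonneg _

end MainProof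

set_option maxHeartbeats 1600000 in
/-- Maximum column norm of a random row restriction. -/
theorem max_column_norm_estimate (n : ℕ) (X : Matrix (Fin n) (Fin n) ℂ) (ρ : ℝ)
    (hρ : ρ ∈ Set.Ioo (0:ℝ) 1) (p : ℝ) (hp1 : 2 * Real.log n ≤ p) (hp2 : 4 ≤ p) :
    (∑ f : Fin n → Bool, bw ρ f * colNorm (bernM f * X) ^ p) ^ (1/p)
      ≤ (2:ℝ) ^ ((3:ℝ)/2) * Real.sqrt p * maxEntry X
        + Real.sqrt ρ * colNorm X := by
  obtain ⟨hρ0, hρ1⟩ := hρ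
  have hp0 : (0:ℝ) < p := by linarith
  obtain ⟨M, hM⟩ : ∃ M, M = maxEntry X := ⟨_, rfl⟩
  obtain ⟨B, hB⟩ : ∃ B, B = colNorm X := ⟨_, rfl⟩
  rw [← hM, ← hB]
  have hM0 : 0 ≤ M := hM ▸ maxEntry_nonneg' X
  have hB0 : 0 ≤ B := hB ▸ colNorm_nonneg' X
  have hbwnn : ∀ f : Fin n → Bool, 0 ≤ bw ρ f := bw_nonneg hρ0.le hρ1.le
  have hRHS0 : 0 ≤ (2:ℝ) ^ ((3:ℝ)/2) * Real.sqrt p * M + Real.sqrt ρ * B := by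
    have h1 : (0:ℝ) ≤ (2:ℝ) ^ ((3:ℝ)/2) := by positivity
    exact add_nonneg (mul_nonneg (mul_nonneg h1 (Real.sqrt_nonneg p)) hM0)
      (mul_nonneg (Real.sqrt_nonneg ρ) hB0)
  rcases Nat.eq_zero_or_pos n with hn0 | hn
  · subst hn0
    have hL : ∀ f : Fin 0 → Bool, colNorm (bernM f * X) ^ p = 0 := by
      intro f
      have : colNorm (bernM f * X) = 0 := by
        simp only [colNorm]; exact Real.iSup_of_isEmpty _
      rw [this, Real.zero_rpow hp0.ne']
    have : ∑ f : Fin 0 → Bool, bw ρ f * colNorm (bernM f * X) ^ p = 0 := by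
      apply Finset.sum_eq_zero; intro f _; rw [hL f, mul_zero]
    rw [this, Real.zero_rpow (by positivity : (1/p) ≠ 0)]
    exact hRHS0
  haveI : Nonempty (Fin n) := ⟨⟨0, hn⟩⟩
  -- basic entry/column facts
  have hMij : ∀ i j, ‖X i j‖ ≤ M := by
    intro i j
    calc ‖X i j‖ ≤ ⨆ j', ‖X i j'‖ :=
          le_ciSup (f := fun j' => ‖X i j'‖) (Set.Finite.bddAbove (Set.finite_range _)) j
      _ ≤ M := by
          rw [hM]; simp only [maxEntry]
          exact le_ciSup (f := fun i => ⨆ j', ‖X i j'‖)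
            (Set.Finite.bddAbove (Set.finite_range _)) i
  have hBj : ∀ j, Real.sqrt (∑ i, ‖X i j‖ ^ 2) ≤ B := by
    intro j; rw [hB]; simp only [colNorm]
    exact le_ciSup (f := fun j => Real.sqrt (∑ i, ‖X i j‖ ^ 2))
      (Set.Finite.bddAbove (Set.finite_range _)) j
  have hcolB : ∀ j, (∑ i, ‖X i j‖ ^ 2) ≤ B ^ 2 := by
    intro j
    have hs : 0 ≤ ∑ i, ‖X i j‖ ^ 2 := Finset.sum_nonneg fun i _ => sq_nonneg _
    calc ∑ i, ‖X i j‖ ^ 2 = (Real.sqrt (∑ i, ‖X i j‖ ^ 2)) ^ 2 := (Real.sq_sqrt hs).symm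
      _ ≤ B ^ 2 := pow_le_pow_left₀ (Real.sqrt_nonneg _) (hBj j) 2
  have hMB : M ≤ B := by
    rw [hM]; simp only [maxEntry]
    apply ciSup_le; intro i; apply ciSup_le; intro j
    calc ‖X i j‖ = Real.sqrt (‖X i j‖ ^ 2) := (Real.sqrt_sq (norm_nonneg _)).symm
      _ ≤ Real.sqrt (∑ i, ‖X i j‖ ^ 2) := Real.sqrt_le_sqrt
          (Finset.single_le_sum (fun i _ => sq_nonneg ‖X i j‖) (Finset.mem_univ i))
      _ ≤ B := hBj j
  by_cases hMz : M = 0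
  · -- degenerate case X = 0
    have hX0 : ∀ i j, ‖X i j‖ = 0 := fun i j =>
      le_antisymm (hMz ▸ hMij i j) (norm_nonneg _)
    have hcol0 : ∀ f : Fin n → Bool, colNorm (bernM f * X) ^ p = 0 := by
      intro f
      have hentry : ∀ i j, ‖(bernM f * X) i j‖ ^ 2 = 0 := by
        intro i j
        have he : (bernM f * X) i j = (if f i then (1:ℂ) else 0) * X i j := by
          simp only [bernM]; rw [Matrix.diagonal_mul]
        rw [he]
        have : X i j = 0 := norm_eq_zero.mp (hX0 i j)
        rw [this, mul_zero]; simp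
      have : colNorm (bernM f * X) = 0 := by
        simp only [colNorm]
        have : ∀ j : Fin n, Real.sqrt (∑ i, ‖(bernM f * X) i j‖ ^ 2) = 0 := by
          intro j
          rw [Finset.sum_eq_zero (fun i _ => hentry i j), Real.sqrt_zero]
        simp only [this, ciSup_const]
      rw [this, Real.zero_rpow hp0.ne']
    have : ∑ f : Fin n → Bool, bw ρ f * colNorm (bernM f * X) ^ p = 0 := by
      apply Finset.sum_eq_zero; intro f _; rw [hcol0 f, mul_zero]
    rw [this, Real.zero_rpow (by positivity : (1/p) ≠ 0)]
    exact hRHS0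
  -- main case
  have hMpos : 0 < M := lt_of_le_of_ne hM0 (Ne.symm hMz)
  have hBpos : 0 < B := lt_of_lt_of_le hMpos hMB
  obtain ⟨q, hq⟩ : ∃ q, q = p / 2 := ⟨_, rfl⟩
  have hq2 : (2:ℝ) ≤ q := by rw [hq]; linarith
  have hq0 : (0:ℝ) < q := by linarith
  have hq1 : (1:ℝ) ≤ q := by linarith
  have hqlog : Real.log n ≤ q := by rw [hq]; linarith
  obtain ⟨σ, hσ⟩ : ∃ σ, σ = Real.sqrt ρ * M * B := ⟨_, rfl⟩
  have hσpos : 0 < σ := hσ ▸ mul_pos (mul_pos (Real.sqrt_pos.2 hρ0) hMpos) hBpos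
  obtain ⟨μ, hμ⟩ : ∃ μ, μ = max (M ^ 2) (σ / Real.sqrt q) := ⟨_, rfl⟩
  have hμM : M ^ 2 ≤ μ := hμ ▸ le_max_left _ _
  have hμpos : 0 < μ := lt_of_lt_of_le (pow_pos hMpos 2) hμM
  have hμσ : σ ≤ μ * Real.sqrt q := by
    have h : σ / Real.sqrt q ≤ μ := hμ ▸ le_max_right (M ^ 2) (σ / Real.sqrt q)
    have hsq : 0 < Real.sqrt q := Real.sqrt_pos.2 hq0
    calc σ = σ / Real.sqrt q * Real.sqrt q := by field_simp
      _ ≤ μ * Real.sqrt q := mul_le_mul_of_nonneg_right h hsq.le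
  obtain ⟨Z, hZ⟩ : ∃ Z : Fin n → (Fin n → Bool) → ℝ,
      Z = fun j f => ∑ i, ((if f i then (1:ℝ) else 0) - ρ) * ‖X i j‖ ^ 2 := ⟨_, rfl⟩
  obtain ⟨W, hW⟩ : ∃ W : (Fin n → Bool) → ℝ, W = fun f => ⨆ j, |Z j f| := ⟨_, rfl⟩
  have hW0 : ∀ f, 0 ≤ W f := by
    intro f; rw [hW]; exact Real.iSup_nonneg fun j => abs_nonneg _
  have hZW : ∀ j f, |Z j f| ≤ W f := by
    intro j f; rw [hW]
    exact le_ciSup (f := fun j => |Z j f|) (Set.Finite.bddAbove (Set.finite_range _)) j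
  obtain ⟨c, hc⟩ : ∃ c, c = ρ * B ^ 2 := ⟨_, rfl⟩
  have hc0 : 0 ≤ c := by rw [hc]; exact mul_nonneg hρ0.le (sq_nonneg B)
  -- Step 1
  have step1 : ∀ f, colNorm (bernM f * X) ^ p ≤ (c + W f) ^ q := by
    intro f
    have hcol : colNorm (bernM f * X) ≤ Real.sqrt (c + W f) := by
      simp only [colNorm]
      apply ciSup_le
      intro j
      apply Real.sqrt_le_sqrt
      have hentry : ∀ i, ‖(bernM f * X) i j‖ ^ 2 = (if f i then (1:ℝ) else 0) * ‖X i j‖ ^ 2 := by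
        intro i
        have he : (bernM f * X) i j = (if f i then (1:ℂ) else 0) * X i j := by
          simp only [bernM]; rw [Matrix.diagonal_mul]
        rw [he]
        by_cases hf : f i <;> simp [hf]
      calc ∑ i, ‖(bernM f * X) i j‖ ^ 2
          = ∑ i, (if f i then (1:ℝ) else 0) * ‖X i j‖ ^ 2 :=
            Finset.sum_congr rfl fun i _ => hentry i
        _ = Z j f + ρ * ∑ i, ‖X i j‖ ^ 2 := by
            simp only [hZ]
            rw [Finset.mul_sum, ← Finset.sum_add_distrib]
            apply Finset.sum_congr rfl; intro i _; ring
        _ ≤ W f + ρ * B ^ 2 := add_le_add (le_trans (le_abs_self _) (hZW j f))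
            (mul_le_mul_of_nonneg_left (hcolB j) hρ0.le)
        _ = c + W f := by rw [hc]; ring
    have hcn0 : 0 ≤ colNorm (bernM f * X) := colNorm_nonneg' _
    have h3 : Real.sqrt (c + W f) ^ p = (c + W f) ^ q := by
      rw [Real.sqrt_eq_rpow, ← Real.rpow_mul (add_nonneg hc0 (hW0 f)), hq]
      congr 1; ring
    calc colNorm (bernM f * X) ^ p ≤ Real.sqrt (c + W f) ^ p :=
          Real.rpow_le_rpow hcn0 hcol hp0.le
      _ = (c + W f) ^ q := h3
  -- Step 2
  obtain ⟨K, hK⟩ : ∃ K, K = Real.sqrt 2 * Real.exp (3/4) * (q * μ) := ⟨_, rfl⟩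
  have hK0 : 0 ≤ K := by
    rw [hK]; exact mul_nonneg (by positivity) (mul_nonneg hq0.le hμpos.le)
  have step2 : ∑ f : Fin n → Bool, bw ρ f * W f ^ q ≤ K ^ q := by
    have h2a : ∀ f, W f ^ q ≤ ∑ j, |Z j f| ^ q := by
      intro f
      obtain ⟨j₀, hj₀⟩ := exists_eq_ciSup_of_finite (f := fun j => |Z j f|)
      have hWf : W f = |Z j₀ f| := by simp only [hW]; exact hj₀.symm
      calc W f ^ q = |Z j₀ f| ^ q := by rw [hWf]
        _ ≤ ∑ j, |Z j f| ^ q := Finset.single_le_sum (f := fun j => |Z j f| ^ q)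
            (fun j _ => Real.rpow_nonneg (abs_nonneg _) q) (Finset.mem_univ j₀)
    have h2b : ∀ j, ∑ f : Fin n → Bool, bw ρ f * |Z j f| ^ q
        ≤ (q * μ / Real.exp 1) ^ q * (2 * Real.exp (3/4 * q)) := by
      intro j
      have hlam : 0 < μ⁻¹ := inv_pos.2 hμpos
      have hqform : q / (Real.exp 1 * μ⁻¹) = q * μ / Real.exp 1 := by
        field_simp
      have hpt : ∀ f, |Z j f| ^ q ≤ (q * μ / Real.exp 1) ^ q *
          (Real.exp (μ⁻¹ * Z j f) + Real.exp (-(μ⁻¹ * Z j f))) := by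
        intro f
        have := abs_rpow_le (q := q) (lam := μ⁻¹) (z := Z j f) hq0 hlam
        rwa [hqform] at this
      have hsc : ∀ (s : ℝ), |s| ≤ μ⁻¹ → ∀ i : Fin n, |s| * ‖X i j‖ ^ 2 ≤ 1 := by
        intro s hs i
        have h1 : ‖X i j‖ ^ 2 ≤ M ^ 2 := pow_le_pow_left₀ (norm_nonneg _) (hMij i j) 2
        have h2 : |s| * ‖X i j‖ ^ 2 ≤ μ⁻¹ * μ := by
          apply mul_le_mul hs (h1.trans hμM) (sq_nonneg _) hlam.le
        rwa [inv_mul_cancel₀ hμpos.ne'] at h2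
      have hvar : ∀ (s : ℝ), s ^ 2 = (μ⁻¹) ^ 2 →
          3/4 * ρ * s ^ 2 * ∑ i, (‖X i j‖ ^ 2) ^ 2 ≤ 3/4 * q := by
        intro s hs
        have h1 : ∑ i, (‖X i j‖ ^ 2) ^ 2 ≤ M ^ 2 * B ^ 2 := by
          have hstep : ∀ i : Fin n, (‖X i j‖ ^ 2) ^ 2 ≤ M ^ 2 * ‖X i j‖ ^ 2 := by
            intro i
            have ha1 : ‖X i j‖ ^ 2 ≤ M ^ 2 := pow_le_pow_left₀ (norm_nonneg _) (hMij i j) 2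
            nlinarith only [ha1, sq_nonneg (‖X i j‖)]
          calc ∑ i, (‖X i j‖ ^ 2) ^ 2 ≤ ∑ i, M ^ 2 * ‖X i j‖ ^ 2 :=
              Finset.sum_le_sum fun i _ => hstep i
            _ = M ^ 2 * ∑ i, ‖X i j‖ ^ 2 := (Finset.mul_sum _ _ _).symm
            _ ≤ M ^ 2 * B ^ 2 := mul_le_mul_of_nonneg_left (hcolB j) (sq_nonneg M)
        have h2 : ρ * (M ^ 2 * B ^ 2) = σ ^ 2 := by
          rw [hσ, mul_pow, mul_pow, Real.sq_sqrt hρ0.le]; ring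
        have h3 : σ ^ 2 ≤ μ ^ 2 * q := by
          have h := pow_le_pow_left₀ hσpos.le hμσ 2
          rwa [mul_pow, Real.sq_sqrt hq0.le] at h
        have h4 : (μ⁻¹) ^ 2 * σ ^ 2 ≤ q := by
          calc (μ⁻¹) ^ 2 * σ ^ 2 ≤ (μ⁻¹) ^ 2 * (μ ^ 2 * q) :=
              mul_le_mul_of_nonneg_left h3 (sq_nonneg _)
            _ = q := by field_simp
        rw [hs]
        have h5 : ρ * ∑ i, (‖X i j‖ ^ 2) ^ 2 ≤ σ ^ 2 :=
          le_of_le_of_eq (mul_le_mul_of_nonneg_left h1 hρ0.le) h2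
        have h6 := mul_le_mul_of_nonneg_left h5 (sq_nonneg μ⁻¹)
        calc 3/4 * ρ * μ⁻¹ ^ 2 * ∑ i, (‖X i j‖ ^ 2) ^ 2
            = 3/4 * (μ⁻¹ ^ 2 * (ρ * ∑ i, (‖X i j‖ ^ 2) ^ 2)) := by ring
          _ ≤ 3/4 * (μ⁻¹ ^ 2 * σ ^ 2) := by linarith only [h6]
          _ ≤ 3/4 * q := by linarith only [h4]
      have hmg1 : ∑ f : Fin n → Bool, bw ρ f * Real.exp (μ⁻¹ * Z j f)
          ≤ Real.exp (3/4 * q) := by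
        have h := mgf_bound (n := n) (s := μ⁻¹) hρ0 hρ1 (fun i => ‖X i j‖ ^ 2)
          (fun i => sq_nonneg _) (hsc μ⁻¹ (by rw [abs_of_pos hlam]))
        beta_reduce at h
        simp only [hZ]
        refine le_trans h (Real.exp_le_exp.2 ?_)
        exact hvar μ⁻¹ rfl
      have hmg2 : ∑ f : Fin n → Bool, bw ρ f * Real.exp (-(μ⁻¹ * Z j f))
          ≤ Real.exp (3/4 * q) := by
        have h := mgf_bound (n := n) (s := -μ⁻¹) hρ0 hρ1 (fun i => ‖X i j‖ ^ 2)
          (fun i => sq_nonneg _) (hsc (-μ⁻¹) (by rw [abs_neg, abs_of_pos hlam]))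
        beta_reduce at h
        simp only [neg_mul] at h
        simp only [hZ]
        refine le_trans h (Real.exp_le_exp.2 ?_)
        exact hvar (-μ⁻¹) (by ring)
      calc ∑ f : Fin n → Bool, bw ρ f * |Z j f| ^ q
          ≤ ∑ f : Fin n → Bool, bw ρ f * ((q * μ / Real.exp 1) ^ q *
              (Real.exp (μ⁻¹ * Z j f) + Real.exp (-(μ⁻¹ * Z j f)))) :=
            Finset.sum_le_sum fun f _ =>
              mul_le_mul_of_nonneg_left (hpt f) (hbwnn f)
        _ = (q * μ / Real.exp 1) ^ q *
              ((∑ f : Fin n → Bool, bw ρ f * Real.exp (μ⁻¹ * Z j f)) +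
               ∑ f : Fin n → Bool, bw ρ f * Real.exp (-(μ⁻¹ * Z j f))) := by
            rw [mul_add, Finset.mul_sum, Finset.mul_sum, ← Finset.sum_add_distrib]
            apply Finset.sum_congr rfl; intro f _; ring
        _ ≤ (q * μ / Real.exp 1) ^ q * (Real.exp (3/4 * q) + Real.exp (3/4 * q)) := by
            apply mul_le_mul_of_nonneg_left (add_le_add hmg1 hmg2)
            exact Real.rpow_nonneg
              (div_nonneg (mul_nonneg hq0.le hμpos.le) (Real.exp_pos 1).le) q
        _ = (q * μ / Real.exp 1) ^ q * (2 * Real.exp (3/4 * q)) := by ring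
    have hnum : (n:ℝ) * ((q * μ / Real.exp 1) ^ q * (2 * Real.exp (3/4 * q))) ≤ K ^ q := by
      have hn1 : (n:ℝ) ≤ Real.exp q := by
        rw [← Real.exp_log (show (0:ℝ) < n by exact_mod_cast hn)]
        exact Real.exp_le_exp.2 hqlog
      have h1s : (1:ℝ) ≤ Real.sqrt 2 := by
        rw [show (1:ℝ) = Real.sqrt 1 from (Real.sqrt_one).symm]
        exact Real.sqrt_le_sqrt (by norm_num)
      have h2q : (2:ℝ) ≤ Real.sqrt 2 ^ q := by
        have e1 : Real.sqrt 2 ^ (2:ℝ) = 2 := by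
          rw [Real.rpow_two, Real.sq_sqrt (by norm_num : (0:ℝ) ≤ 2)]
        calc (2:ℝ) = Real.sqrt 2 ^ (2:ℝ) := e1.symm
          _ ≤ Real.sqrt 2 ^ q := Real.rpow_le_rpow_of_exponent_le h1s hq2
      have key : 2 * (n:ℝ) ≤ Real.sqrt 2 ^ q * Real.exp q := by
        calc 2 * (n:ℝ) ≤ 2 * Real.exp q := by linarith only [hn1]
          _ ≤ Real.sqrt 2 ^ q * Real.exp q :=
              mul_le_mul_of_nonneg_right h2q (Real.exp_pos q).le
      have hKq : K ^ q = Real.sqrt 2 ^ q * Real.exp (3/4 * q) * (q * μ) ^ q := by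
        rw [hK, Real.mul_rpow (by positivity) (mul_nonneg hq0.le hμpos.le),
          Real.mul_rpow (Real.sqrt_nonneg 2) (Real.exp_pos _).le, ← Real.exp_mul]
      have hdq : (q * μ / Real.exp 1) ^ q = (q * μ) ^ q / Real.exp q := by
        rw [Real.div_rpow (mul_nonneg hq0.le hμpos.le) (Real.exp_pos 1).le,
          Real.exp_one_rpow]
      rw [hKq, hdq]
      rw [show (n:ℝ) * ((q * μ) ^ q / Real.exp q * (2 * Real.exp (3/4 * q)))
          = 2 * (n:ℝ) * ((q * μ) ^ q * Real.exp (3/4 * q)) / Real.exp q by ring,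
        div_le_iff₀ (Real.exp_pos q)]
      have hP : (0:ℝ) ≤ (q * μ) ^ q * Real.exp (3/4 * q) :=
        mul_nonneg (Real.rpow_nonneg (mul_nonneg hq0.le hμpos.le) q) (Real.exp_pos _).le
      calc 2 * (n:ℝ) * ((q * μ) ^ q * Real.exp (3/4 * q))
          ≤ Real.sqrt 2 ^ q * Real.exp q * ((q * μ) ^ q * Real.exp (3/4 * q)) :=
            mul_le_mul_of_nonneg_right key hP
        _ = Real.sqrt 2 ^ q * Real.exp (3/4 * q) * (q * μ) ^ q * Real.exp q := by ring
    calc ∑ f : Fin n → Bool, bw ρ f * W f ^ q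
        ≤ ∑ f : Fin n → Bool, bw ρ f * ∑ j, |Z j f| ^ q :=
          Finset.sum_le_sum fun f _ => mul_le_mul_of_nonneg_left (h2a f) (hbwnn f)
      _ = ∑ j, ∑ f : Fin n → Bool, bw ρ f * |Z j f| ^ q := by
          simp_rw [Finset.mul_sum]; exact Finset.sum_comm
      _ ≤ ∑ _j : Fin n, (q * μ / Real.exp 1) ^ q * (2 * Real.exp (3/4 * q)) :=
          Finset.sum_le_sum fun j _ => h2b j
      _ = (n:ℝ) * ((q * μ / Real.exp 1) ^ q * (2 * Real.exp (3/4 * q))) := by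
          rw [Finset.sum_const, Finset.card_univ, Fintype.card_fin, nsmul_eq_mul]
      _ ≤ K ^ q := hnum
  -- Step 3 : Minkowski
  have step3 : ∑ f : Fin n → Bool, bw ρ f * (c + W f) ^ q ≤ (c + K) ^ q := by
    have hpow : ∀ (x y : ℝ), 0 ≤ x → 0 ≤ y → ((x ^ (1/q)) * y) ^ q = x * y ^ q := by
      intro x y hx hy
      rw [Real.mul_rpow (Real.rpow_nonneg hx _) hy, ← Real.rpow_mul hx,
        one_div_mul_cancel hq0.ne', Real.rpow_one]
    have hmink := Real.Lp_add_le_of_nonneg (s := Finset.univ)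
      (f := fun f : Fin n → Bool => (bw ρ f) ^ (1/q) * c)
      (g := fun f : Fin n → Bool => (bw ρ f) ^ (1/q) * W f) hq1
      (fun f _ => mul_nonneg (Real.rpow_nonneg (hbwnn f) _) hc0)
      (fun f _ => mul_nonneg (Real.rpow_nonneg (hbwnn f) _) (hW0 f))
    have e1 : ∑ f : Fin n → Bool, ((bw ρ f) ^ (1/q) * c + (bw ρ f) ^ (1/q) * W f) ^ q
        = ∑ f : Fin n → Bool, bw ρ f * (c + W f) ^ q := by
      apply Finset.sum_congr rfl; intro f _
      rw [show (bw ρ f) ^ (1/q) * c + (bw ρ f) ^ (1/q) * W f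
          = (bw ρ f) ^ (1/q) * (c + W f) by ring]
      exact hpow _ _ (hbwnn f) (add_nonneg hc0 (hW0 f))
    have e2 : ∑ f : Fin n → Bool, ((bw ρ f) ^ (1/q) * c) ^ q = c ^ q := by
      calc ∑ f : Fin n → Bool, ((bw ρ f) ^ (1/q) * c) ^ q
          = ∑ f : Fin n → Bool, bw ρ f * c ^ q :=
            Finset.sum_congr rfl fun f _ => hpow _ _ (hbwnn f) hc0
        _ = (∑ f : Fin n → Bool, bw ρ f) * c ^ q := (Finset.sum_mul _ _ _).symm
        _ = c ^ q := by rw [bw_sum, one_mul]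
    have e3 : ∑ f : Fin n → Bool, ((bw ρ f) ^ (1/q) * W f) ^ q
        = ∑ f : Fin n → Bool, bw ρ f * W f ^ q :=
      Finset.sum_congr rfl fun f _ => hpow _ _ (hbwnn f) (hW0 f)
    rw [e1, e2, e3] at hmink
    have hcq : (c ^ q) ^ (1/q) = c := by
      rw [← Real.rpow_mul hc0, mul_one_div_cancel hq0.ne', Real.rpow_one]
    rw [hcq] at hmink
    have hT0 : 0 ≤ ∑ f : Fin n → Bool, bw ρ f * W f ^ q :=
      Finset.sum_nonneg fun f _ => mul_nonneg (hbwnn f) (Real.rpow_nonneg (hW0 f) q)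
    have hTK : (∑ f : Fin n → Bool, bw ρ f * W f ^ q) ^ (1/q) ≤ K := by
      calc (∑ f : Fin n → Bool, bw ρ f * W f ^ q) ^ (1/q)
          ≤ (K ^ q) ^ (1/q) := Real.rpow_le_rpow hT0 step2 (one_div_nonneg.2 hq0.le)
        _ = K := by rw [← Real.rpow_mul hK0, mul_one_div_cancel hq0.ne', Real.rpow_one]
    have hfin : (∑ f : Fin n → Bool, bw ρ f * (c + W f) ^ q) ^ (1/q) ≤ c + K :=
      le_trans hmink (add_le_add (le_refl c) hTK)
    have hsum0 : 0 ≤ ∑ f : Fin n → Bool, bw ρ f * (c + W f) ^ q :=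
      Finset.sum_nonneg fun f _ => mul_nonneg (hbwnn f)
        (Real.rpow_nonneg (add_nonneg hc0 (hW0 f)) q)
    calc ∑ f : Fin n → Bool, bw ρ f * (c + W f) ^ q
        = ((∑ f : Fin n → Bool, bw ρ f * (c + W f) ^ q) ^ (1/q)) ^ q := by
          rw [← Real.rpow_mul hsum0, one_div_mul_cancel hq0.ne', Real.rpow_one]
      _ ≤ (c + K) ^ q := Real.rpow_le_rpow (Real.rpow_nonneg hsum0 _) hfin hq0.le
  -- Step 4 : numerics
  obtain ⟨A, hA⟩ : ∃ A, A = (2:ℝ) ^ ((3:ℝ)/2) * Real.sqrt p * M := ⟨_, rfl⟩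
  obtain ⟨C2, hC2⟩ : ∃ C2, C2 = Real.sqrt ρ * B := ⟨_, rfl⟩
  rw [← hA, ← hC2]
  have hA0 : 0 ≤ A := by
    rw [hA]; exact mul_nonneg (mul_nonneg (by positivity) (Real.sqrt_nonneg p)) hM0
  have hC20 : 0 ≤ C2 := by rw [hC2]; exact mul_nonneg (Real.sqrt_nonneg ρ) hB0
  have step4 : c + K ≤ (A + C2) ^ 2 := by
    have hA2 : A ^ 2 = 8 * p * M ^ 2 := by
      have h8 : ((2:ℝ) ^ ((3:ℝ)/2)) ^ 2 = 8 := by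
        rw [← Real.rpow_two, ← Real.rpow_mul (by norm_num : (0:ℝ) ≤ 2)]
        rw [show (3:ℝ)/2 * 2 = ((3:ℕ):ℝ) by push_cast; ring, Real.rpow_natCast]
        norm_num
      rw [hA, mul_pow, mul_pow, Real.sq_sqrt hp0.le, h8]
    have hC2sq : C2 ^ 2 = ρ * B ^ 2 := by
      rw [hC2, mul_pow, Real.sq_sqrt hρ0.le]
    have hx0 : 0 ≤ Real.sqrt p * Real.sqrt ρ * M * B :=
      mul_nonneg (mul_nonneg (mul_nonneg (Real.sqrt_nonneg p) (Real.sqrt_nonneg ρ)) hM0) hB0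
    have hAC : 4 * (Real.sqrt p * Real.sqrt ρ * M * B) ≤ 2 * (A * C2) := by
      have h32 : (2:ℝ) ≤ (2:ℝ) ^ ((3:ℝ)/2) := by
        calc (2:ℝ) = (2:ℝ) ^ (1:ℝ) := (Real.rpow_one 2).symm
          _ ≤ (2:ℝ) ^ ((3:ℝ)/2) :=
            Real.rpow_le_rpow_of_exponent_le one_le_two (by norm_num)
      rw [hA, hC2]
      nlinarith only [mul_le_mul_of_nonneg_right h32 hx0, hx0]
    have hKle : K ≤ 8 * p * M ^ 2 + 4 * (Real.sqrt p * Real.sqrt ρ * M * B) := by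
      have hμle : μ ≤ M ^ 2 + σ / Real.sqrt q := by
        rw [hμ]
        apply max_le (le_add_of_nonneg_right
            (div_nonneg hσpos.le (Real.sqrt_nonneg q)))
          (le_add_of_nonneg_left (sq_nonneg M))
      have hE : Real.exp (3/4) ≤ 2.72 := by
        calc Real.exp (3/4) ≤ Real.exp 1 := Real.exp_le_exp.2 (by norm_num)
          _ ≤ 2.72 := by linarith [Real.exp_one_lt_d9]
      have hs2 : Real.sqrt 2 ≤ 1.5 := by
        nlinarith only [Real.sq_sqrt (by norm_num : (0:ℝ) ≤ 2), Real.sqrt_nonneg 2]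
      have hsqrtqne : Real.sqrt q ≠ 0 := (Real.sqrt_pos.2 hq0).ne'
      have hsqq : q * (σ / Real.sqrt q) = Real.sqrt q * σ := by
        have h2 : Real.sqrt q * (σ / Real.sqrt q) = σ := by
          field_simp
        calc q * (σ / Real.sqrt q)
            = Real.sqrt q * (Real.sqrt q * (σ / Real.sqrt q)) := by
              rw [← mul_assoc, Real.mul_self_sqrt hq0.le]
          _ = Real.sqrt q * σ := by rw [h2]
      have hsp : Real.sqrt 2 * Real.sqrt q = Real.sqrt p := by
        rw [← Real.sqrt_mul (by norm_num : (0:ℝ) ≤ 2) q]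
        congr 1; rw [hq]; ring
      have hKle1 : K ≤ Real.sqrt 2 * Real.exp (3/4) * (q * M ^ 2)
          + Real.exp (3/4) * (Real.sqrt p * σ) := by
        rw [hK]
        calc Real.sqrt 2 * Real.exp (3/4) * (q * μ)
            ≤ Real.sqrt 2 * Real.exp (3/4) * (q * (M ^ 2 + σ / Real.sqrt q)) := by
              apply mul_le_mul_of_nonneg_left _ (by positivity)
              exact mul_le_mul_of_nonneg_left hμle hq0.le
          _ = Real.sqrt 2 * Real.exp (3/4) * (q * M ^ 2)
              + Real.sqrt 2 * Real.exp (3/4) * (q * (σ / Real.sqrt q)) := by ring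
          _ = Real.sqrt 2 * Real.exp (3/4) * (q * M ^ 2)
              + Real.exp (3/4) * (Real.sqrt p * σ) := by
              rw [hsqq, ← hsp]; ring
      have ht1 : Real.sqrt 2 * Real.exp (3/4) * (q * M ^ 2) ≤ 8 * p * M ^ 2 := by
        have hpM : 0 ≤ p * M ^ 2 := mul_nonneg hp0.le (sq_nonneg M)
        have hcoef : Real.sqrt 2 * Real.exp (3/4) ≤ 4.08 := by
          nlinarith only [hs2, hE, Real.exp_pos (3/4:ℝ), Real.sqrt_nonneg 2]
        rw [hq]
        nlinarith only [mul_le_mul_of_nonneg_right hcoef hpM, hpM]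
      have ht2 : Real.exp (3/4) * (Real.sqrt p * σ)
          ≤ 4 * (Real.sqrt p * Real.sqrt ρ * M * B) := by
        have hx : 0 ≤ Real.sqrt p * σ := mul_nonneg (Real.sqrt_nonneg p) hσpos.le
        have h := mul_le_mul_of_nonneg_right hE hx
        rw [hσ] at h hx ⊢
        nlinarith only [h, hx]
      linarith only [hKle1, ht1, ht2]
    have expand : (A + C2) ^ 2 = A ^ 2 + 2 * (A * C2) + C2 ^ 2 := by ring
    rw [expand, hA2, hC2sq, hc]
    linarith only [hKle, hAC]
  -- assemble
  have hR0 : 0 ≤ A + C2 := add_nonneg hA0 hC20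
  have hfinal : ∑ f : Fin n → Bool, bw ρ f * colNorm (bernM f * X) ^ p
      ≤ (A + C2) ^ p := by
    calc ∑ f : Fin n → Bool, bw ρ f * colNorm (bernM f * X) ^ p
        ≤ ∑ f : Fin n → Bool, bw ρ f * (c + W f) ^ q :=
          Finset.sum_le_sum fun f _ =>
            mul_le_mul_of_nonneg_left (step1 f) (hbwnn f)
      _ ≤ (c + K) ^ q := step3
      _ ≤ ((A + C2) ^ 2) ^ q := Real.rpow_le_rpow (add_nonneg hc0 hK0) step4 hq0.le
      _ = (A + C2) ^ p := by
          rw [← Real.rpow_natCast (A + C2) 2, ← Real.rpow_mul hR0]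
          congr 1; rw [hq]; push_cast; ring
  have hsum0 : 0 ≤ ∑ f : Fin n → Bool, bw ρ f * colNorm (bernM f * X) ^ p :=
    Finset.sum_nonneg fun f _ => mul_nonneg (hbwnn f)
      (Real.rpow_nonneg (colNorm_nonneg' _) p)
  calc (∑ f : Fin n → Bool, bw ρ f * colNorm (bernM f * X) ^ p) ^ (1/p)
      ≤ ((A + C2) ^ p) ^ (1/p) := Real.rpow_le_rpow hsum0 hfinal (one_div_nonneg.2 hp0.le)
    _ = A + C2 := by
        rw [← Real.rpow_mul hR0, mul_one_div_cancel hp0.ne', Real.rpow_one]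
end

section
/- Let r(t) = Σ_{k=0}^d c_k t^k be a polynomial of degree at most d with real coefficients. Then for each k = 0, 1, ..., d, the coefficient satisfies |c_k| ≤ (d^k / k!) · max_{|t| ≤ 1} |r(t)| ≤ e^d · max_{|t| ≤ 1} |r(t)|. -/
open scoped BigOperators

open Polynomial Real

namespace MarkovAux

set_option maxHeartbeats 2000000


lemma nat_pow_succ_le (n k : ℕ) : (n+1)^(k+1) ≤ n^(k+1) + (k+1)*(n+1)^k := by
  induction k with
  | zero => simpa using by omega
  | succ k ih =>
    have h1 : (n+1)^(k+2) = (n+1)*(n+1)^(k+1) := by ring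
    have h2 : (n+1)*(n+1)^(k+1) ≤ (n+1)*(n^(k+1) + (k+1)*(n+1)^k) :=
      Nat.mul_le_mul_left _ ih
    have h3 : n^(k+1) ≤ (n+1)^(k+1) := Nat.pow_le_pow_left (by omega) _
    calc (n+1)^(k+2) ≤ (n+1)*(n^(k+1) + (k+1)*(n+1)^k) := by rw [h1]; exact h2
      _ = n^(k+2) + n^(k+1) + (k+1)*(n+1)^(k+1) := by ring
      _ ≤ n^(k+2) + (n+1)^(k+1) + (k+1)*(n+1)^(k+1) := by omega
      _ = n^(k+2) + (k+2)*(n+1)^(k+1) := by ring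

lemma nat_key (n k : ℕ) : 2*(k+1)*(n+1)^k + n^(k+1) ≤ (n+2)^(k+1) := by
  induction k with
  | zero => simpa using by omega
  | succ k ih =>
    have step : (k+2)*(n+1)^(k+1) ≤ (k+1)*(n+2)*(n+1)^k + n^(k+1) := by
      have h1 : (n+1)^(k+1) ≤ n^(k+1) + (k+1)*(n+1)^k := nat_pow_succ_le n k
      calc (k+2)*(n+1)^(k+1) = (k+1)*(n+1)^(k+1) + (n+1)^(k+1) := by ring
        _ ≤ (k+1)*(n+1)^(k+1) + (n^(k+1) + (k+1)*(n+1)^k) := Nat.add_le_add_left h1 _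
        _ = (k+1)*((n+1)^(k+1) + (n+1)^k) + n^(k+1) := by ring
        _ = (k+1)*((n+2)*(n+1)^k) + n^(k+1) := by
            congr 2
            calc (n+1)^(k+1) + (n+1)^k = (n+1)*(n+1)^k + 1*(n+1)^k := by ring
              _ = (n+2)*(n+1)^k := by ring
        _ = (k+1)*(n+2)*(n+1)^k + n^(k+1) := by ring
    calc 2*(k+2)*(n+1)^(k+1) + n^(k+2)
        = 2*((k+2)*(n+1)^(k+1)) + n^(k+2) := by ring
      _ ≤ 2*((k+1)*(n+2)*(n+1)^k + n^(k+1)) + n^(k+2) :=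
          Nat.add_le_add_right (Nat.mul_le_mul_left _ step) _
      _ = (n+2)*(2*(k+1)*(n+1)^k) + (2*n^(k+1) + n^(k+2)) := by ring
      _ = (n+2)*(2*(k+1)*(n+1)^k) + (n+2)*n^(k+1) := by ring
      _ = (n+2)*(2*(k+1)*(n+1)^k + n^(k+1)) := by ring
      _ ≤ (n+2)*(n+2)^(k+1) := Nat.mul_le_mul_left _ ih
      _ = (n+2)^(k+2) := by ring

/-- bundled Chebyshev coefficient facts -/
lemma cheb_package (n : ℕ) : ∀ k : ℕ,
    (n < k → (Chebyshev.T ℝ n).coeff k = 0) ∧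
    (k % 2 ≠ n % 2 → (Chebyshev.T ℝ n).coeff k = 0) ∧
    |(Chebyshev.T ℝ n).coeff k| * (k.factorial : ℝ) ≤ (n:ℝ)^k := by
  induction n using Nat.twoStepInduction with
  | zero =>
    intro k
    simp only [Nat.cast_zero, Chebyshev.T_zero, coeff_one]
    refine ⟨fun h => by simp [show k ≠ 0 by omega], fun h => ?_, ?_⟩
    · rcases Nat.eq_zero_or_pos k with rfl | hk
      · simp at h
      · simp [show k ≠ 0 by omega]
    · rcases Nat.eq_zero_or_pos k with rfl | hk
      · norm_num
      · simp [show k ≠ 0 by omega]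
  | one =>
    intro k
    simp only [Nat.cast_one, Chebyshev.T_one, coeff_X]
    refine ⟨fun h => by simp [show ¬(1 = k) by omega], fun h => ?_, ?_⟩
    · have : ¬(1 = k) := by omega
      simp [this]
    · rcases eq_or_ne k 1 with rfl | hk
      · simp
      · simp [show ¬(1 = k) by omega]

  | more n ih ih1 =>
    intro k
    have hrec : Chebyshev.T ℝ ((n:ℤ)+2) = 2 * X * Chebyshev.T ℝ ((n:ℤ)+1) - Chebyshev.T ℝ n :=
      Chebyshev.T_add_two ℝ n
    have hcast2 : ((n+2 : ℕ) : ℤ) = (n:ℤ)+2 := by push_cast; ring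
    have hcast1 : ((n+1 : ℕ) : ℤ) = (n:ℤ)+1 := by push_cast; ring
    have hco : ∀ k : ℕ, (Chebyshev.T ℝ (n+2:ℕ)).coeff k
        = 2 * (X * Chebyshev.T ℝ ((n+1:ℕ))).coeff k - (Chebyshev.T ℝ n).coeff k := by
      intro k
      rw [hcast2, hrec, ← hcast1]
      rw [coeff_sub]
      congr 1
      rw [show (2 : ℝ[X]) * X * Chebyshev.T ℝ ((n+1:ℕ)) = 2 * (X * Chebyshev.T ℝ ((n+1:ℕ))) by ring]
      rw [coeff_ofNat_mul]
      try norm_num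
    refine ⟨?_, ?_, ?_⟩
    · intro hk
      rw [hco]
      rcases Nat.exists_eq_succ_of_ne_zero (show k ≠ 0 by omega) with ⟨j, rfl⟩
      rw [coeff_X_mul]
      rw [(ih1 j).1 (by omega), (ih (j+1)).1 (by omega)]
      ring
    · intro hk
      rw [hco]
      rcases Nat.eq_zero_or_pos k with rfl | hpos
      · rw [coeff_X_mul_zero, (ih (0:ℕ)).2.1 (by omega)]
        ring
      · rcases Nat.exists_eq_succ_of_ne_zero hpos.ne' with ⟨j, rfl⟩
        rw [coeff_X_mul, (ih1 j).2.1 (by omega), (ih (j+1)).2.1 (by omega)]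
        ring
    · rw [hco]
      rcases Nat.eq_zero_or_pos k with rfl | hpos
      · rw [coeff_X_mul_zero]
        have := (ih (0:ℕ)).2.2
        simp only [Nat.factorial_zero, Nat.cast_one, mul_one, pow_zero] at this ⊢
        rw [show (2:ℝ) * 0 - (Chebyshev.T ℝ (n:ℕ)).coeff 0 = -((Chebyshev.T ℝ (n:ℕ)).coeff 0) by ring,
          abs_neg]
        exact this.trans (by norm_num)
      · rcases Nat.exists_eq_succ_of_ne_zero hpos.ne' with ⟨j, rfl⟩
        rw [coeff_X_mul]
        have h1 := (ih1 j).2.2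
        have h2 := (ih (j+1)).2.2
        have habs : |2 * (Chebyshev.T ℝ ((n+1:ℕ))).coeff j - (Chebyshev.T ℝ (n:ℕ)).coeff (j+1)|
            ≤ 2 * |(Chebyshev.T ℝ ((n+1:ℕ))).coeff j| + |(Chebyshev.T ℝ (n:ℕ)).coeff (j+1)| := by
          calc _ ≤ |2 * (Chebyshev.T ℝ ((n+1:ℕ))).coeff j| + |(Chebyshev.T ℝ (n:ℕ)).coeff (j+1)| :=
                abs_sub _ _
            _ = _ := by rw [abs_mul]; norm_num
        have hnat : ((2*(j+1)*(n+1)^j + n^(j+1) : ℕ) : ℝ) ≤ (((n+2)^(j+1) : ℕ) : ℝ) := by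
          exact_mod_cast nat_key n j
        push_cast at hnat
        have hfac : ((j+1).factorial : ℝ) = (j+1) * (j.factorial : ℝ) := by
          push_cast [Nat.factorial_succ]; ring
        have hfpos : (0:ℝ) < (j.factorial : ℝ) := by positivity
        calc |2 * (Chebyshev.T ℝ ((n+1:ℕ))).coeff j - (Chebyshev.T ℝ (n:ℕ)).coeff (j+1)|
              * ((j+1).factorial : ℝ)
            ≤ (2 * |(Chebyshev.T ℝ ((n+1:ℕ))).coeff j| + |(Chebyshev.T ℝ (n:ℕ)).coeff (j+1)|)
              * ((j+1).factorial : ℝ) := by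
              apply mul_le_mul_of_nonneg_right habs (by positivity)
          _ = 2*((j:ℝ)+1) * (|(Chebyshev.T ℝ ((n+1:ℕ))).coeff j| * (j.factorial : ℝ))
              + ((j:ℝ)+1) * (|(Chebyshev.T ℝ (n:ℕ)).coeff (j+1)| * (j.factorial : ℝ)) := by
              rw [hfac]; ring
          _ ≤ 2*((j:ℝ)+1) * ((n:ℝ)+1)^j
              + ((j:ℝ)+1) * (|(Chebyshev.T ℝ (n:ℕ)).coeff (j+1)| * (j.factorial : ℝ)) := by
              gcongr
              · exact_mod_cast h1
          _ = 2*((j:ℝ)+1) * ((n:ℝ)+1)^j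
              + (|(Chebyshev.T ℝ (n:ℕ)).coeff (j+1)| * (((j+1).factorial : ℝ))) := by
              rw [hfac]; ring
          _ ≤ 2*((j:ℝ)+1) * ((n:ℝ)+1)^j + (n:ℝ)^(j+1) :=
              add_le_add_right (by exact_mod_cast h2) _
          _ ≤ ((n:ℝ)+2)^(j+1) := by push_cast at hnat ⊢; linarith
          _ = (((n+2:ℕ)):ℝ)^(j+1) := by push_cast; ring

/-- IVT for polynomials with sign change. -/
lemma ivt_sign (f : ℝ[X]) {a b : ℝ} (hab : a < b) (hs : f.eval a * f.eval b < 0) :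
    ∃ u, u ∈ Set.Ioo a b ∧ f.eval u = 0 := by
  have hc : ContinuousOn (fun t => f.eval t) (Set.Icc a b) :=
    (f.continuous_aeval).continuousOn
  rcases lt_or_ge (f.eval a) 0 with h1 | h1
  · have h2 : 0 < f.eval b := by nlinarith
    have := intermediate_value_Ioo (le_of_lt hab) hc
    have h0 : (0:ℝ) ∈ Set.Ioo (f.eval a) (f.eval b) := ⟨h1, h2⟩
    rcases this h0 with ⟨u, hu, hu0⟩
    exact ⟨u, hu, hu0⟩
  · have h1' : 0 < f.eval a := by
      rcases (eq_or_lt_of_le h1).imp_left Eq.symm with h | h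
      · exfalso; rw [h, zero_mul] at hs; exact lt_irrefl 0 hs
      · exact h
    have h2 : f.eval b < 0 := by nlinarith
    have := intermediate_value_Ioo' (le_of_lt hab) hc
    have h0 : (0:ℝ) ∈ Set.Ioo (f.eval b) (f.eval a) := ⟨h2, h1'⟩
    rcases this h0 with ⟨u, hu, hu0⟩
    exact ⟨u, hu, hu0⟩

lemma multiset_sum_pos (s : Multiset ℝ) (h : ∀ x ∈ s, (0:ℝ) < x) (h0 : s ≠ 0) : 0 < s.sum := by
  induction s using Multiset.induction with
  | empty => simp at h0
  | cons a t ih =>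
    rw [Multiset.sum_cons]
    rcases eq_or_ne t 0 with rfl | ht
    · simpa using h a (by simp)
    · have h1 := ih (fun x hx => h x (Multiset.mem_cons_of_mem hx)) ht
      have ha := h a (Multiset.mem_cons_self a t)
      linarith

/-- esymm of a multiset of positive reals is positive. -/
lemma esymm_pos (s : Multiset ℝ) (hs : ∀ x ∈ s, (0:ℝ) < x) (m : ℕ) (hm : m ≤ Multiset.card s) :
    0 < s.esymm m := by
  rw [Multiset.esymm]
  apply multiset_sum_pos
  · intro x hx
    rcases Multiset.mem_map.mp hx with ⟨t, ht, rfl⟩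
    have hts := (Multiset.mem_powersetCard.mp ht).1
    exact Multiset.prod_pos fun y hy => hs y (Multiset.mem_of_le hts hy)
  · intro h0
    have hcard := Multiset.card_powersetCard m s
    rw [Multiset.map_eq_zero.mp h0] at hcard
    simp only [Multiset.card_zero] at hcard
    have := Nat.choose_pos hm
    omega
 
lemma cos_nat_pi (j : ℕ) : Real.cos (j * π) = (-1)^j := by
  simpa using Real.cos_nat_mul_pi_sub 0 j

/-- Main comparison lemma: parity case. -/
lemma main_lemma (d k : ℕ) (hd1 : 1 ≤ d) (hkd : k ≤ d) (hpar : k % 2 = d % 2)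
    (r : ℝ[X]) (hdeg : r.natDegree ≤ d)
    (hparr : ∀ m, m % 2 ≠ k % 2 → r.coeff m = 0)
    (M : ℝ) (hM : ∀ t : ℝ, |t| ≤ 1 → |r.eval t| ≤ M) :
    |r.coeff k| ≤ |(Chebyshev.T ℝ d).coeff k| * M := by
  by_contra hcon
  push_neg at hcon
  have hM0 : 0 ≤ M := le_trans (abs_nonneg _) (hM 0 (by norm_num))
  set τ := (Chebyshev.T ℝ d).coeff k with hτ
  set c := r.coeff k with hc
  have hc0 : c ≠ 0 := by
    intro h; rw [h] at hcon; simp at hcon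
    nlinarith [abs_nonneg τ, hcon]
  set μ := τ / c with hμ
  set q : ℝ[X] := Chebyshev.T ℝ d - C μ * r with hqdef
  have hq0 : q.coeff k = 0 := by
    rw [hqdef]; simp only [coeff_sub, coeff_C_mul]
    rw [hμ]; field_simp
    rw [← hτ, ← hc]; ring
  have hqdeg : q.natDegree ≤ d := by
    apply le_trans (natDegree_sub_le _ _)
    apply max_le
    · exact natDegree_le_iff_coeff_eq_zero.mpr fun m hm => (cheb_package d m).1 hm
    · exact le_trans (natDegree_mul_le) (by simpa using hdeg)
  have hqpar : ∀ m, m % 2 ≠ d % 2 → q.coeff m = 0 := by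
    intro m hm
    rw [hqdef]; simp only [coeff_sub, coeff_C_mul]
    rw [(cheb_package d m).2.1 hm, hparr m (hpar ▸ hm)]
    ring
  -- nodes
  set x : ℕ → ℝ := fun j => Real.cos (j * π / d) with hx
  have hxmem : ∀ j : ℕ, j ≤ d → |x j| ≤ 1 := fun j _ => Real.abs_cos_le_one _
  have hTval : ∀ j : ℕ, j ≤ d → (Chebyshev.T ℝ d).eval (x j) = (-1)^j := by
    intro j hj
    rw [hx]
    have := Polynomial.Chebyshev.T_real_cos (j * π / d) (d : ℤ)
    simp only [Int.cast_natCast] at this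
    rw [this]
    rw [show (d:ℝ) * (j * π / d) = j * π by field_simp]
    exact cos_nat_pi j
  have hsign : ∀ j : ℕ, j ≤ d → 0 < (-1:ℝ)^j * q.eval (x j) := by
    intro j hj
    have hqe : q.eval (x j) = (-1)^j - μ * r.eval (x j) := by
      rw [hqdef]; simp [hTval j hj]
    have hb : |μ * r.eval (x j)| < 1 := by
      rw [abs_mul, hμ, abs_div]
      rcases eq_or_lt_of_le (abs_nonneg τ) with h0 | h0
      · rw [← h0]; simpa using by positivity
      · rw [div_mul_eq_mul_div, div_lt_one (by positivity)]
        calc |τ| * |r.eval (x j)| ≤ |τ| * M := by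
              apply mul_le_mul_of_nonneg_left (hM _ (hxmem j hj)) (abs_nonneg _)
          _ < |c| := hcon
    rw [hqe]
    have : (-1:ℝ)^j * ((-1:ℝ)^j - μ * r.eval (x j))
        = 1 - (-1:ℝ)^j * (μ * r.eval (x j)) := by
      rcases Nat.even_or_odd j with he | ho
      · rw [he.neg_one_pow]; ring
      · rw [ho.neg_one_pow]; ring
    rw [this]
    have habs : (-1:ℝ)^j * (μ * r.eval (x j)) ≤ |μ * r.eval (x j)| := by
      calc _ ≤ |(-1:ℝ)^j * (μ * r.eval (x j))| := le_abs_self _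
        _ = |μ * r.eval (x j)| := by rw [abs_mul, abs_pow, abs_neg, abs_one, one_pow, one_mul]
    linarith
  -- parity split of q
  set P := d / 2 with hP
  set δ := d % 2 with hδ
  have hdPδ : d = 2*P + δ := by omega
  set g : ℝ[X] := ∑ i ∈ Finset.range (P+1), monomial i (q.coeff (δ + 2*i)) with hg
  have hgcoeff : ∀ i, g.coeff i = if i ≤ P then q.coeff (δ + 2*i) else 0 := by
    intro i
    rw [hg, finset_sum_coeff]
    simp only [coeff_monomial]
    rw [Finset.sum_ite_eq' (Finset.range (P+1)) i (fun i' => q.coeff (δ + 2*i'))]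
    simp [Nat.lt_succ_iff]
  have hgdeg : g.natDegree ≤ P := by
    apply natDegree_le_iff_coeff_eq_zero.mpr
    intro m hm
    rw [hgcoeff]
    simp [Nat.not_le.mpr hm]
  have heval : ∀ t : ℝ, q.eval t = t^δ * g.eval (t^2) := by
    intro t
    have h1 : q.eval t = ∑ m ∈ Finset.range (d+1), q.coeff m * t^m :=
      eval_eq_sum_range' (lt_of_le_of_lt hqdeg (lt_add_one d)) t
    have h2 : g.eval (t^2) = ∑ i ∈ Finset.range (P+1), q.coeff (δ+2*i) * (t^2)^i := by
      rw [hg, eval_finset_sum]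
      simp [eval_monomial]
    have hstep : ∑ m ∈ Finset.range (d+1), q.coeff m * t^m
        = ∑ m ∈ (Finset.range (d+1)).filter (fun m => m % 2 = d % 2), q.coeff m * t^m := by
      symm
      apply Finset.sum_filter_of_ne
      intro m _ hne
      by_contra hpar2
      exact hne (by rw [hqpar m hpar2, zero_mul])
    have hbij : ∑ m ∈ (Finset.range (d+1)).filter (fun m => m % 2 = d % 2), q.coeff m * t^m
        = ∑ i ∈ Finset.range (P+1), q.coeff (δ+2*i) * t^(δ+2*i) := by
      apply Finset.sum_nbij' (i := fun m => (m - δ)/2) (j := fun i => δ + 2*i)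
      · intro m hm
        simp only [Finset.mem_filter, Finset.mem_range] at hm
        simp only [Finset.mem_range]
        omega
      · intro i hi
        simp only [Finset.mem_range] at hi
        simp only [Finset.mem_filter, Finset.mem_range]
        omega
      · intro m hm
        simp only [Finset.mem_filter, Finset.mem_range] at hm
        omega
      · intro i hi
        simp only [Finset.mem_range] at hi
        omega
      · intro m hm
        simp only [Finset.mem_filter, Finset.mem_range] at hm
        have hmeq : δ + 2*((m - δ)/2) = m := by omega
        rw [hmeq]
    rw [h1, h2, hstep, hbij, Finset.mul_sum]
    apply Finset.sum_congr rfl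
    intro i _
    rw [← pow_mul]
    ring
  -- angles and node ordering
  have hd0 : (0:ℝ) < d := by exact_mod_cast hd1
  have hθmem : ∀ j : ℕ, j ≤ P → (j:ℝ)*π/d ∈ Set.Icc 0 (π/2) := by
    intro j hj
    constructor
    · positivity
    · rw [div_le_div_iff₀ hd0 (by norm_num : (0:ℝ) < 2)]
      have : (2*j : ℝ) ≤ d := by exact_mod_cast (by omega : 2*j ≤ d)
      nlinarith [Real.pi_pos]
  have hxnn : ∀ j : ℕ, j ≤ P → 0 ≤ x j := by
    intro j hj
    apply Real.cos_nonneg_of_mem_Icc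
    have := hθmem j hj
    constructor
    · linarith [this.1, Real.pi_pos]
    · exact this.2
  have hxanti : ∀ i j : ℕ, i < j → j ≤ P → x j < x i := by
    intro i j hij hj
    apply Real.strictAntiOn_cos
    · have := hθmem i (by omega)
      exact ⟨this.1, this.2.trans (by linarith [Real.pi_pos])⟩
    · have := hθmem j hj
      exact ⟨this.1, this.2.trans (by linarith [Real.pi_pos])⟩
    · rw [div_lt_div_iff₀ hd0 hd0]
      have h1 : (i:ℝ) < j := by exact_mod_cast hij
      have h2 : (i:ℝ)*π < j*π := mul_lt_mul_of_pos_right h1 Real.pi_pos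
      exact mul_lt_mul_of_pos_right h2 hd0
  have hs2 : ∀ i j : ℕ, i < j → j ≤ P → (x j)^2 < (x i)^2 := by
    intro i j hij hj
    have h1 := hxnn j hj
    have h2 := hxanti i j hij hj
    nlinarith
  -- signs of g at node squares
  have hxδpos : ∀ j : ℕ, j ≤ P → 0 < (x j)^δ := by
    intro j hj
    rcases Nat.eq_zero_or_pos δ with h0 | h1
    · rw [h0, pow_zero]; norm_num
    · have hδ1 : δ = 1 := by omega
      rw [hδ1, pow_one]
      apply Real.cos_pos_of_mem_Ioo
      have := hθmem j hj
      constructor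
      · linarith [this.1, Real.pi_pos]
      · rcases lt_or_eq_of_le this.2 with h | h
        · exact h
        · exfalso
          -- angle = π/2 means 2*j = d, impossible since d odd
          rw [div_eq_div_iff (ne_of_gt hd0) (by norm_num : (2:ℝ) ≠ 0)] at h
          have : (2*j : ℝ) = d := by nlinarith [Real.pi_pos]
          have : 2*j = d := by exact_mod_cast this
          omega
  have hgs : ∀ j : ℕ, j ≤ P → 0 < (-1:ℝ)^j * g.eval ((x j)^2) := by
    intro j hj
    have h1 := hsign j (by omega)
    rw [heval (x j)] at h1
    have h2 := hxδpos j hj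
    rcases lt_trichotomy ((-1:ℝ)^j * g.eval ((x j)^2)) 0 with h | h | h
    · exfalso
      have : (-1:ℝ)^j * ((x j)^δ * g.eval ((x j)^2))
          = (x j)^δ * ((-1:ℝ)^j * g.eval ((x j)^2)) := by ring
      rw [this] at h1
      nlinarith
    · exfalso
      have hgz : g.eval ((x j)^2) = 0 := by
        rcases mul_eq_zero.mp h with h' | h'
        · exfalso; exact pow_ne_zero j (by norm_num : (-1:ℝ) ≠ 0) h'
        · exact h'
      rw [hgz] at h1
      simp at h1
    · exact h
  have hg0 : g ≠ 0 := by
    intro h0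
    have := hgs 0 (Nat.zero_le _)
    rw [h0] at this
    simp at this
  -- roots of g via IVT
  have hroots : ∀ j : ℕ, ∃ u : ℝ, j < P →
      ((x (j+1))^2 < u ∧ u < (x j)^2) ∧ g.IsRoot u := by
    intro j
    rcases Nat.lt_or_ge j P with hjP | hjP
    · have ha := hgs (j+1) (by omega)
      have hb := hgs j (by omega)
      have hab : (x (j+1))^2 < (x j)^2 := hs2 j (j+1) (by omega) (by omega)
      have hprod : g.eval ((x (j+1))^2) * g.eval ((x j)^2) < 0 := by
        have hpow : ((-1:ℝ))^(j+1) * (-1)^j = -1 := by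
          rw [← pow_add, show j+1+j = 2*j+1 by omega, pow_succ, pow_mul]
          norm_num
        have : ((-1:ℝ)^(j+1) * g.eval ((x (j+1))^2)) * ((-1:ℝ)^j * g.eval ((x j)^2))
            = -(g.eval ((x (j+1))^2) * g.eval ((x j)^2)) := by
          calc _ = ((-1:ℝ)^(j+1) * (-1)^j) * (g.eval ((x (j+1))^2) * g.eval ((x j)^2)) := by ring
            _ = _ := by rw [hpow]; ring
        nlinarith
      rcases ivt_sign g hab hprod with ⟨u, hu, hu0⟩
      exact ⟨u, fun _ => ⟨⟨hu.1, hu.2⟩, hu0⟩⟩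
    · exact ⟨0, fun h => absurd h (by omega)⟩
  choose u hu using hroots
  have hupos : ∀ j : ℕ, j < P → 0 < u j := by
    intro j hj
    have h1 := (hu j hj).1.1
    have h2 := sq_nonneg (x (j+1))
    nlinarith
  have hudec : ∀ i j : ℕ, i < j → j < P → u j < u i := by
    intro i j hij hj
    have h1 := (hu j hj).1.2
    have h2 := (hu i (by omega)).1.1
    have h3 : (x j)^2 ≤ (x (i+1))^2 := by
      rcases Nat.eq_or_lt_of_le (show i+1 ≤ j by omega) with h | h
      · rw [h]
      · exact le_of_lt (hs2 (i+1) j h (by omega))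
    linarith
  -- the multiset of roots
  set ms : Multiset ℝ := (Multiset.range P).map u with hms
  have hmscard : Multiset.card ms = P := by
    rw [hms, Multiset.card_map, Multiset.card_range]
  have hmsnodup : ms.Nodup := by
    rw [hms]
    apply Multiset.Nodup.map_on _ (Multiset.nodup_range P)
    intro a ha b hb hab
    rw [Multiset.mem_range] at ha hb
    rcases Nat.lt_trichotomy a b with h | h | h
    · exact absurd hab (ne_of_gt (hudec a b h hb))
    · exact h
    · exact absurd hab.symm (ne_of_gt (hudec b a h ha))
  have hmsroot : ∀ a ∈ ms, g.IsRoot a := by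
    intro a ha
    rcases Multiset.mem_map.mp ha with ⟨j, hj, rfl⟩
    rw [Multiset.mem_range] at hj
    exact (hu j hj).2
  have hmspos : ∀ a ∈ ms, (0:ℝ) < a := by
    intro a ha
    rcases Multiset.mem_map.mp ha with ⟨j, hj, rfl⟩
    rw [Multiset.mem_range] at hj
    exact hupos j hj
  have hle : ms ≤ g.roots := by
    rw [Multiset.le_iff_count]
    intro a
    rcases Decidable.em (a ∈ ms) with ha | ha
    · have h1 : Multiset.count a ms = 1 := Multiset.count_eq_one_of_mem hmsnodup ha
      have h2 : 1 ≤ Multiset.count a g.roots := by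
        rw [count_roots]
        exact (rootMultiplicity_pos hg0).mpr (hmsroot a ha)
      omega
    · rw [Multiset.count_eq_zero_of_notMem ha]
      omega
  obtain ⟨h, hgh⟩ := (Multiset.prod_X_sub_C_dvd_iff_le_roots hg0 ms).mpr hle
  have hprodmonic : (ms.map (fun a => X - C a)).prod.Monic :=
    monic_multiset_prod_of_monic _ _ (fun a _ => monic_X_sub_C a)
  have hproddeg : (ms.map (fun a => X - C a)).prod.natDegree = P := by
    rw [natDegree_multiset_prod_X_sub_C_eq_card, hmscard]
  have hh0 : h ≠ 0 := by
    intro h0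
    rw [h0, mul_zero] at hgh
    exact hg0 hgh
  have hhdeg : h.natDegree = 0 := by
    have := natDegree_mul (hprodmonic.ne_zero) hh0
    rw [← hgh, hproddeg] at this
    omega
  obtain ⟨cc, rfl⟩ : ∃ cc : ℝ, h = C cc := ⟨h.coeff 0, (eq_C_of_natDegree_eq_zero hhdeg)⟩
  have hcc0 : cc ≠ 0 := by
    intro h0
    rw [h0, map_zero] at hh0
    exact hh0 rfl
  -- the contradiction at coefficient κ
  obtain ⟨κ, hκ1, hκ2⟩ : ∃ κ : ℕ, k = δ + 2*κ ∧ κ ≤ P := ⟨(k - δ)/2, by omega, by omega⟩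
  have hgκ : g.coeff κ = 0 := by
    rw [hgcoeff, if_pos hκ2, ← hκ1, hq0]
  have hκcard : κ ≤ Multiset.card ms := by omega
  have hcoeffprod : (ms.map (fun a => X - C a)).prod.coeff κ
      = (-1)^(Multiset.card ms - κ) * ms.esymm (Multiset.card ms - κ) :=
    Multiset.prod_X_sub_C_coeff ms hκcard
  have hesym : 0 < ms.esymm (Multiset.card ms - κ) :=
    esymm_pos ms hmspos _ (by omega)
  have : g.coeff κ ≠ 0 := by
    rw [hgh, coeff_mul_C, hcoeffprod]
    apply mul_ne_zero
    apply mul_ne_zero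
    · exact pow_ne_zero _ (by norm_num)
    · exact ne_of_gt hesym
    · exact hcc0
  exact this hgκ


end MarkovAux

set_option maxHeartbeats 2000000 in
/-- V. A. Markov's coefficient bound for polynomials on [-1,1]. -/
theorem markov_coefficient_bound (d : ℕ) (r : Polynomial ℝ) (hd : r.natDegree ≤ d)
    (M : ℝ) (hM : ∀ t : ℝ, |t| ≤ 1 → |r.eval t| ≤ M) (k : ℕ) (hk : k ≤ d) :
    |r.coeff k| ≤ (d:ℝ) ^ k / (k.factorial : ℝ) * M ∧
      (d:ℝ) ^ k / (k.factorial : ℝ) * M ≤ Real.exp d * M := by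
  have hM0 : 0 ≤ M := le_trans (abs_nonneg _) (hM 0 (by norm_num))
  constructor
  · -- main bound
    rcases Nat.eq_zero_or_pos k with rfl | hk1
    · simpa [Polynomial.coeff_zero_eq_eval_zero] using hM 0 (by norm_num)
    · -- parity reduction
      set d' : ℕ := k + 2*((d-k)/2) with hd'
      have hkd' : k ≤ d' := by omega
      have hd'd : d' ≤ d := by omega
      have hd'1 : 1 ≤ d' := by omega
      have hpar' : k % 2 = d' % 2 := by omega
      have hkey : ∀ m : ℕ, m % 2 = k % 2 → m ≤ d → m ≤ d' := by intro m h1 h2; omega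
      set S : Finset ℕ := (Finset.range (d'+1)).filter (fun m => m % 2 = k % 2) with hS
      set r' : ℝ[X] := ∑ m ∈ S, monomial m (r.coeff m) with hr'
      have hr'coeff : ∀ mm : ℕ, r'.coeff mm
          = if mm ∈ S then r.coeff mm else 0 := by
        intro mm
        rw [hr', finset_sum_coeff]
        simp only [coeff_monomial]
        exact Finset.sum_ite_eq' S mm (fun m => r.coeff m)
      have hr'deg : r'.natDegree ≤ d' := by
        apply natDegree_le_iff_coeff_eq_zero.mpr
        intro m hm
        rw [hr'coeff]
        have : m ∉ S := by
          rw [hS]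
          simp only [Finset.mem_filter, Finset.mem_range]
          omega
        simp [this]
      have hr'par : ∀ m, m % 2 ≠ k % 2 → r'.coeff m = 0 := by
        intro m hm
        rw [hr'coeff]
        have : m ∉ S := by
          rw [hS]; simp only [Finset.mem_filter, Finset.mem_range]; tauto
        simp [this]
      have hr'k : r'.coeff k = r.coeff k := by
        rw [hr'coeff, if_pos]
        rw [hS]
        simp only [Finset.mem_filter, Finset.mem_range]
        exact ⟨by omega, trivial⟩
      have hr'eval : ∀ t : ℝ, r'.eval t = (r.eval t + (-1)^k * r.eval (-t))/2 := by
        intro t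
        have h1 : r.eval t = ∑ m ∈ Finset.range (d+1), r.coeff m * t^m :=
          eval_eq_sum_range' (lt_of_le_of_lt hd (lt_add_one d)) t
        have h2 : r.eval (-t) = ∑ m ∈ Finset.range (d+1), r.coeff m * (-t)^m :=
          eval_eq_sum_range' (lt_of_le_of_lt hd (lt_add_one d)) (-t)
        have h3 : r'.eval t = ∑ m ∈ S, r.coeff m * t^m := by
          rw [hr', eval_finset_sum]
          simp [eval_monomial]
        have hSS : S = (Finset.range (d+1)).filter (fun m => m % 2 = k % 2) := by
          rw [hS]
          apply Finset.ext
          intro m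
          simp only [Finset.mem_filter, Finset.mem_range]
          constructor
          · intro ⟨h4, h5⟩; exact ⟨by omega, h5⟩
          · intro ⟨h4, h5⟩; exact ⟨by omega, h5⟩
        rw [h1, h2, h3, hSS, Finset.sum_filter, Finset.mul_sum, ← Finset.sum_add_distrib,
          Finset.sum_div]
        apply Finset.sum_congr rfl
        intro m _
        have hneg : (-t)^m = (-1)^m * t^m := by
          rw [neg_pow]
        rw [hneg]
        rcases Nat.even_or_odd k with hk2 | hk2 <;> rcases Nat.even_or_odd m with hm2 | hm2
        · have e1 := Nat.even_iff.mp hk2; have e2 := Nat.even_iff.mp hm2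
          rw [if_pos (by omega : m % 2 = k % 2), hk2.neg_one_pow, hm2.neg_one_pow]; ring
        · have e1 := Nat.even_iff.mp hk2; have e2 := Nat.odd_iff.mp hm2
          rw [if_neg (by omega : ¬ m % 2 = k % 2), hk2.neg_one_pow, hm2.neg_one_pow]; ring
        · have e1 := Nat.odd_iff.mp hk2; have e2 := Nat.even_iff.mp hm2
          rw [if_neg (by omega : ¬ m % 2 = k % 2), hk2.neg_one_pow, hm2.neg_one_pow]; ring
        · have e1 := Nat.odd_iff.mp hk2; have e2 := Nat.odd_iff.mp hm2
          rw [if_pos (by omega : m % 2 = k % 2), hk2.neg_one_pow, hm2.neg_one_pow]; ring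
      have hr'M : ∀ t : ℝ, |t| ≤ 1 → |r'.eval t| ≤ M := by
        intro t ht
        rw [hr'eval]
        have h1 : |r.eval t| ≤ M := hM t ht
        have h2 : |r.eval (-t)| ≤ M := hM (-t) (by rwa [abs_neg])
        have h3 : |(-1:ℝ)^k * r.eval (-t)| = |r.eval (-t)| := by
          rw [abs_mul, abs_pow, abs_neg, abs_one, one_pow, one_mul]
        rw [abs_div, abs_two, div_le_iff₀ (by norm_num : (0:ℝ) < 2)]
        have h4 := abs_add_le (r.eval t) ((-1)^k * r.eval (-t))
        rw [h3] at h4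
        linarith
      have hmain := MarkovAux.main_lemma d' k hd'1 hkd' hpar' r' hr'deg hr'par M hr'M
      rw [hr'k] at hmain
      have hfacpos : (0:ℝ) < (k.factorial : ℝ) := by positivity
      have hcheb := (MarkovAux.cheb_package d' k).2.2
      have hτ : |(Chebyshev.T ℝ d').coeff k| ≤ (d':ℝ)^k / (k.factorial : ℝ) := by
        rw [le_div_iff₀ hfacpos]
        exact hcheb
      have hdd : (d':ℝ)^k ≤ (d:ℝ)^k := by
        have : (d':ℝ) ≤ (d:ℝ) := by exact_mod_cast hd'd
        exact pow_le_pow_left₀ (by positivity) this k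
      calc |r.coeff k| ≤ |(Chebyshev.T ℝ d').coeff k| * M := hmain
        _ ≤ ((d':ℝ)^k / (k.factorial : ℝ)) * M := mul_le_mul_of_nonneg_right hτ hM0
        _ ≤ ((d:ℝ)^k / (k.factorial : ℝ)) * M := by
            apply mul_le_mul_of_nonneg_right _ hM0
            exact div_le_div_of_nonneg_right hdd hfacpos.le
  · -- e^d bound
    have h1 : (d:ℝ)^k/(k.factorial:ℝ) ≤ Real.exp d := by
      have h2 := Real.sum_le_exp_of_nonneg (by positivity : (0:ℝ) ≤ (d:ℝ)) (k+1)
      have h3 : (d:ℝ)^k/(k.factorial:ℝ) ≤ ∑ i ∈ Finset.range (k+1), (d:ℝ)^i/(i.factorial:ℝ) := by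
        refine Finset.single_le_sum (f := fun i => (d:ℝ)^i/(i.factorial:ℝ))
          (fun i _ => by positivity) (Finset.self_mem_range_succ k)
      linarith
    exact mul_le_mul_of_nonneg_right h1 hM0
end

section
/- Let s ∈ [0,1] and let X be any n×n matrix. The function s ↦ E trace((R_s X R_s)^p), where R_s is a random diagonal matrix with i.i.d. Bernoulli(s) diagonal entries and p is a positive integer, is a polynomial in s of degree at most p with zero constant term. -/
open scoped BigOperators

noncomputable def wprod {n m : ℕ} (A : Matrix (Fin n) (Fin n) ℂ) (v : Fin (m+1) → Fin n) : ℂ :=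
  ∏ k : Fin m, A (v k.castSucc) (v k.succ)

lemma pow_entry {n : ℕ} (A : Matrix (Fin n) (Fin n) ℂ) :
    ∀ m (i j : Fin n), (A ^ m) i j =
      ∑ v : Fin (m+1) → Fin n,
        if v 0 = i ∧ v (Fin.last m) = j then wprod A v else 0 := by
  intro m
  induction m with
  | zero =>
    intro i j
    rw [pow_zero, ← Equiv.sum_comp (Equiv.funUnique (Fin 1) (Fin n)).symm]
    simp [wprod, Matrix.one_apply, ite_and, Finset.sum_ite_eq]
  | succ m ih =>
    intro i j
    rw [pow_succ, Matrix.mul_apply]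
    simp only [ih, Finset.sum_mul, ite_mul, zero_mul]
    rw [Finset.sum_comm]
    conv_rhs => rw [← Equiv.sum_comp (Fin.snocEquiv fun _ => Fin n), Fintype.sum_prod_type_right]
    refine Finset.sum_congr rfl fun v _ => ?_
    have h0 : ∀ x : Fin n, (Fin.snoc v x : Fin (m+2) → Fin n) 0 = v 0 := by
      intro x
      rw [show (0 : Fin (m+2)) = Fin.castSucc 0 by rfl, Fin.snoc_castSucc]
    have hw : ∀ x : Fin n, wprod A (Fin.snoc v x : Fin (m+2) → Fin n)
        = wprod A v * A (v (Fin.last m)) x := by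
      intro x
      unfold wprod
      rw [Fin.prod_univ_castSucc]
      congr 1
      · refine Finset.prod_congr rfl fun k _ => ?_
        rw [Fin.succ_castSucc, Fin.snoc_castSucc, Fin.snoc_castSucc]
      · rw [Fin.succ_last, Fin.snoc_castSucc, Fin.snoc_last]
    simp only [Fin.snocEquiv_apply]
    by_cases hv : v 0 = i
    · have hsn : ∀ x, ((Fin.snocEquiv fun _ => Fin n) (x, v) : Fin (m+2) → Fin n)
          = Fin.snoc v x := fun _ => rfl
      simp [h0, hw, hv, hsn, Finset.sum_ite_eq, Finset.sum_ite_eq', mul_comm]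
    · simp [h0, hv]

lemma trace_pow_walks {n m : ℕ} (A : Matrix (Fin n) (Fin n) ℂ)
    (hA : ∀ m' (i j : Fin n), (A ^ m') i j =
      ∑ v : Fin (m'+1) → Fin n,
        if v 0 = i ∧ v (Fin.last m') = j then wprod A v else 0) :
    (A ^ (m+1)).trace
      = ∑ v : Fin (m+2) → Fin n, if v 0 = v (Fin.last (m+1)) then wprod A v else 0 := by
  rw [Matrix.trace]
  simp only [Matrix.diag, hA (m+1)]
  rw [Finset.sum_comm]
  refine Finset.sum_congr rfl fun v _ => ?_
  by_cases hv : v 0 = v (Fin.last (m+1))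
  · simp [ite_and, hv, Finset.sum_ite_eq, Finset.sum_ite_eq']
  · simp only [ite_and]
    rw [Finset.sum_eq_zero, if_neg hv]
    intro i _
    by_cases h0 : v 0 = i
    · rw [if_pos h0, if_neg]
      intro h
      exact hv (h0.trans h.symm)
    · rw [if_neg h0]

lemma bern_sum {n : ℕ} (s : ℂ) (S : Finset (Fin n)) :
    (∑ f : Fin n → Bool,
      (∏ i, if f i then s else 1 - s) * ∏ i ∈ S, if f i then (1:ℂ) else 0)
      = s ^ S.card := by
  have key : ∀ f : Fin n → Bool,
      (∏ i, if f i then s else 1 - s) * (∏ i ∈ S, if f i then (1:ℂ) else 0)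
      = ∏ i, ((if f i then s else 1 - s) *
          (if i ∈ S then (if f i then (1:ℂ) else 0) else 1)) := by
    intro f
    rw [Finset.prod_mul_distrib]
    congr 1
    rw [Finset.prod_ite_mem, Finset.univ_inter]
  simp only [key]
  rw [← Fintype.prod_sum (κ := fun _ : Fin n => Bool)
    (f := fun i b => (if b then s else 1 - s) * (if i ∈ S then (if b then (1:ℂ) else 0) else 1))]
  have : ∀ i : Fin n, (∑ b : Bool, (if b then s else 1 - s) *
      (if i ∈ S then (if b then (1:ℂ) else 0) else 1)) = if i ∈ S then s else 1 := by
    intro i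
    rw [Fintype.sum_bool]
    by_cases h : i ∈ S <;> simp [h]
  simp only [this]
  rw [Finset.prod_ite_mem, Finset.univ_inter, Finset.prod_const]

lemma ind_prod {n m : ℕ} (f : Fin n → Bool) (v : Fin (m+2) → Fin n) :
    (∏ k : Fin (m+1), (if f (v k.castSucc) then (1:ℂ) else 0) *
        (if f (v k.succ) then (1:ℂ) else 0))
      = ∏ i ∈ Finset.image v Finset.univ, if f i then (1:ℂ) else 0 := by
  have l : ∀ k : Fin (m+1), (if f (v k.castSucc) then (1:ℂ) else 0) *
      (if f (v k.succ) then (1:ℂ) else 0)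
      = if f (v k.castSucc) ∧ f (v k.succ) then (1:ℂ) else 0 := by
    intro k; split_ifs <;> simp_all
  simp only [l]
  rw [Finset.prod_boole, Finset.prod_boole]
  congr 1
  simp only [Finset.mem_univ, forall_true_left, Finset.mem_image, eq_iff_iff,
    forall_exists_index]
  constructor
  · rintro h i j ⟨-, hj⟩
    subst hj
    induction j using Fin.cases with
    | zero => exact (h 0).1
    | succ k => exact (h k).2
  · intro h k
    exact ⟨h _ k.castSucc ⟨trivial, rfl⟩, h _ k.succ ⟨trivial, rfl⟩⟩

/-- The expected trace of (R_s X R_s)^p is a polynomial in s of degree ≤ p with no constant term. -/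
theorem trace_is_polynomial (n p : ℕ) (hp : 0 < p) (X : Matrix (Fin n) (Fin n) ℂ) :
    ∃ q : Polynomial ℂ, q.natDegree ≤ p ∧ q.coeff 0 = 0 ∧
      ∀ s : ℝ, s ∈ Set.Icc (0:ℝ) 1 →
        (∑ f : Fin n → Bool, (bw s f : ℂ) * ((bernM f * X * bernM f) ^ p).trace)
          = q.eval (s : ℂ) := by
  obtain ⟨m, rfl⟩ := Nat.exists_eq_succ_of_ne_zero hp.ne'
  classical
  set c : (Fin (m+2) → Fin n) → ℂ :=
    fun v => ∏ k : Fin (m+1), X (v k.castSucc) (v k.succ) with hc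
  set d : (Fin (m+2) → Fin n) → ℕ :=
    fun v => (Finset.image v Finset.univ).card with hd
  refine ⟨∑ v : Fin (m+2) → Fin n,
      if v 0 = v (Fin.last (m+1)) then Polynomial.C (c v) * Polynomial.X ^ (d v) else 0,
    ?_, ?_, ?_⟩
  · -- degree bound
    refine Polynomial.natDegree_sum_le_of_forall_le _ _ fun v _ => ?_
    by_cases hv : v 0 = v (Fin.last (m+1))
    · rw [if_pos hv]
      refine (Polynomial.natDegree_C_mul_le _ _).trans ?_
      rw [Polynomial.natDegree_X_pow]
      have hsub : Finset.image v Finset.univ ⊆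
          Finset.image (fun k : Fin (m+1) => v k.castSucc) Finset.univ := by
        intro x hx
        obtain ⟨j, -, rfl⟩ := Finset.mem_image.mp hx
        induction j using Fin.lastCases with
        | last =>
          rw [← hv]
          exact Finset.mem_image.mpr ⟨0, Finset.mem_univ _, by rw [Fin.castSucc_zero]⟩
        | cast k => exact Finset.mem_image.mpr ⟨k, Finset.mem_univ _, rfl⟩
      calc d v ≤ (Finset.image (fun k : Fin (m+1) => v k.castSucc) Finset.univ).card :=
            Finset.card_le_card hsub
        _ ≤ (Finset.univ : Finset (Fin (m+1))).card := Finset.card_image_le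
        _ = m + 1 := by simp
    · rw [if_neg hv]; simp
  · -- constant coefficient
    rw [Polynomial.finset_sum_coeff]
    refine Finset.sum_eq_zero fun v _ => ?_
    by_cases hv : v 0 = v (Fin.last (m+1))
    · rw [if_pos hv, Polynomial.coeff_C_mul, Polynomial.coeff_X_pow, if_neg, mul_zero]
      have : (Finset.image v Finset.univ).Nonempty :=
        (Finset.image_nonempty).mpr Finset.univ_nonempty
      exact fun h => (Finset.card_pos.mpr this).ne' h.symm
    · rw [if_neg hv]; simp
  · -- evaluation
    intro s _
    have hbw : ∀ f : Fin n → Bool,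
        ((bw s f : ℝ) : ℂ) = ∏ i, if f i then (s:ℂ) else 1 - (s:ℂ) := by
      intro f
      simp [bw, Complex.ofReal_prod, apply_ite (Complex.ofReal)]
    have hwp : ∀ (f : Fin n → Bool) (v : Fin (m+2) → Fin n),
        wprod (bernM f * X * bernM f) v
          = c v * ∏ i ∈ Finset.image v Finset.univ, if f i then (1:ℂ) else 0 := by
      intro f v
      rw [← ind_prod f v, ← Finset.prod_mul_distrib]
      refine Finset.prod_congr rfl fun k _ => ?_
      simp only [bernM, Matrix.mul_diagonal, Matrix.diagonal_mul]
      ring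
    calc (∑ f : Fin n → Bool, (bw s f : ℂ) * ((bernM f * X * bernM f) ^ (m+1)).trace)
        = ∑ f : Fin n → Bool, ∑ v : Fin (m+2) → Fin n,
            (if v 0 = v (Fin.last (m+1)) then
              (∏ i, if f i then (s:ℂ) else 1 - (s:ℂ)) *
                (c v * ∏ i ∈ Finset.image v Finset.univ, if f i then (1:ℂ) else 0) else 0) := by
          refine Finset.sum_congr rfl fun f _ => ?_
          rw [trace_pow_walks _ (pow_entry _), Finset.mul_sum]
          refine Finset.sum_congr rfl fun v _ => ?_
          rw [hbw, hwp, mul_ite, mul_zero]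
      _ = ∑ v : Fin (m+2) → Fin n,
            (if v 0 = v (Fin.last (m+1)) then c v * (s:ℂ) ^ (d v) else 0) := by
          rw [Finset.sum_comm]
          refine Finset.sum_congr rfl fun v _ => ?_
          by_cases hv : v 0 = v (Fin.last (m+1))
          · simp only [if_pos hv]
            rw [← bern_sum (s:ℂ) (Finset.image v Finset.univ), Finset.mul_sum]
            exact Finset.sum_congr rfl fun f _ => by ring
          · simp [if_neg hv]
      _ = Polynomial.eval (s:ℂ) (∑ v : Fin (m+2) → Fin n,
            if v 0 = v (Fin.last (m+1)) then Polynomial.C (c v) * Polynomial.X ^ (d v)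
            else 0) := by
          rw [Polynomial.eval_finset_sum]
          refine Finset.sum_congr rfl fun v _ => ?_
          rw [apply_ite (Polynomial.eval ((s:ℝ):ℂ))]
          simp
end
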